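/- arXiv:2312.00418 — 7 statements merged into one kernel-verified Lean document; each statement's English description precedes it below -/
import Mathlib

section
/- Let G be a connected claw-free cubic multigraph. Then any two distinct diamonds in G are vertex-disjoint, unless G is isomorphic to K4. -/
/-- A multigraph on vertex set `V`: a symmetric edge-multiplicity function with no loops. -/
structure Multigraph (V : Type*) where
  mult : V → V → ℕ
  symm : ∀ u v, mult u v = mult v u
  loopless : ∀ v, mult v v = 0

namespace Multigraph

variable {V : Type*}

/-- Adjacency: distinct vertices joined by at least one edge. -/
def Adj (G : Multigraph V) (u v : V) : Prop := u ≠ v ∧ 0 < G.mult u v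

/-- The underlying simple graph. -/
def toSimple (G : Multigraph V) : SimpleGraph V where
  Adj u v := u ≠ v ∧ 0 < G.mult u v
  symm := ⟨fun u v h => ⟨h.1.symm, by rw [G.symm v u]; exact h.2⟩⟩
  loopless := ⟨fun v h => h.1 rfl⟩

def Connected (G : Multigraph V) : Prop := G.toSimple.Connected

section Fin
variable [Fintype V] [DecidableEq V]

/-- The degree of a vertex, counting edge multiplicities. -/
def degree (G : Multigraph V) (v : V) : ℕ := ∑ u, G.mult v u

def IsCubic (G : Multigraph V) : Prop := ∀ v, G.degree v = 3

end Fin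

variable [DecidableEq V]

/-- No induced claw `K_{1,3}` (centre `c`, leaves `a b d`). -/
def IsClawFree (G : Multigraph V) : Prop :=
  ¬ ∃ c a b d : V, c ≠ a ∧ c ≠ b ∧ c ≠ d ∧ a ≠ b ∧ a ≠ d ∧ b ≠ d ∧
      G.mult c a = 1 ∧ G.mult c b = 1 ∧ G.mult c d = 1 ∧
      G.mult a b = 0 ∧ G.mult a d = 0 ∧ G.mult b d = 0

/-- An induced triangle (cycle of length three, all sides simple edges). -/
def IsTriangle (G : Multigraph V) (a b c : V) : Prop :=
  a ≠ b ∧ a ≠ c ∧ b ≠ c ∧ G.mult a b = 1 ∧ G.mult a c = 1 ∧ G.mult b c = 1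

/-- A trumpet: a triangle whose side `ab` is a multiple edge. -/
def IsTrumpet (G : Multigraph V) (a b c : V) : Prop :=
  a ≠ b ∧ a ≠ c ∧ b ≠ c ∧ G.mult a b = 2 ∧ G.mult a c = 1 ∧ G.mult b c = 1

/-- A digon: two vertices joined by parallel edges. -/
def IsDigon (G : Multigraph V) (u v : V) : Prop := u ≠ v ∧ 2 ≤ G.mult u v

/-- A diamond: an induced `K₄` minus the edge `ad`. -/
def IsDiamond (G : Multigraph V) (a b c d : V) : Prop :=
  a ≠ b ∧ a ≠ c ∧ a ≠ d ∧ b ≠ c ∧ b ≠ d ∧ c ≠ d ∧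
  G.mult a d = 0 ∧ G.mult a b = 1 ∧ G.mult a c = 1 ∧ G.mult b c = 1 ∧
  G.mult b d = 1 ∧ G.mult c d = 1

/-- The vertex sets of the diamonds of `G`. -/
def diamondSets (G : Multigraph V) : Set (Finset V) :=
  {s | ∃ a b c d, s = {a, b, c, d} ∧ G.IsDiamond a b c d}

/-- The number of diamonds of `G`. -/
noncomputable def diamondCount (G : Multigraph V) : ℕ := G.diamondSets.ncard

/-- The vertex sets of the digons of `G` that are not the multiple side of a trumpet. -/
def digonSets (G : Multigraph V) : Set (Finset V) :=
  {s | ∃ u v, s = {u, v} ∧ G.IsDigon u v ∧ ∀ w, ¬ G.IsTrumpet u v w}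

/-- The number of digons of `G` (not counting those inside trumpets). -/
noncomputable def digonCount (G : Multigraph V) : ℕ := G.digonSets.ncard

/-- `G` is (isomorphic to) the simple complete graph `K₄`. -/
def IsK4 (G : Multigraph V) : Prop :=
  Nonempty (G.toSimple ≃g (⊤ : SimpleGraph (Fin 4))) ∧ ∀ u v, G.mult u v ≤ 1

section Bisection
variable [Fintype V]

/-- A bisection: the two parts `B` and `Bᶜ` have the same size. -/
def IsBisection (G : Multigraph V) (B : Finset V) : Prop := B.card = Bᶜ.card

/-- The number of monochromatic edges inside the part `B` (with multiplicity). -/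
def monoEdges (G : Multigraph V) (B : Finset V) : ℕ :=
  (∑ u ∈ B, ∑ v ∈ B, G.mult u v) / 2

/-- The total number of monochromatic edges of the bisection `(B, Bᶜ)`. -/
def epsilon (G : Multigraph V) (B : Finset V) : ℕ := G.monoEdges B + G.monoEdges Bᶜ

/-- The simple graph induced by `G` on the part `B`. -/
def inducedSimple (G : Multigraph V) (B : Finset V) : SimpleGraph V where
  Adj u v := u ≠ v ∧ u ∈ B ∧ v ∈ B ∧ 0 < G.mult u v
  symm := ⟨fun u v h => ⟨h.1.symm, h.2.2.1, h.2.1, by rw [G.symm v u]; exact h.2.2.2⟩⟩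
  loopless := ⟨fun v h => h.1 rfl⟩

/-- Every monochromatic component inside `B` has at most `k` vertices. -/
def SmallComponents (G : Multigraph V) (B : Finset V) (k : ℕ) : Prop :=
  ∀ v ∈ B, {u | (G.inducedSimple B).Reachable v u}.ncard ≤ k

/-- A `k`-bisection. -/
def IsKBisection (G : Multigraph V) (B : Finset V) (k : ℕ) : Prop :=
  G.IsBisection B ∧ G.SmallComponents B k ∧ G.SmallComponents Bᶜ k

/-- A desired bisection: (DB1) exactly one monochromatic edge per triangle, (DB2) every
monochromatic edge lies in a triangle, (DB3) exactly one monochromatic edge per diamond,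
(DB4) no multiple edge is monochromatic. -/
def IsDesired (G : Multigraph V) (B : Finset V) : Prop :=
  G.IsBisection B ∧
  (∀ a b c, G.IsTriangle a b c →
    (({(a, b), (a, c), (b, c)} : Finset (V × V)).filter
      (fun e => e.1 ∈ B ↔ e.2 ∈ B)).card = 1) ∧
  (∀ u v, G.Adj u v → (u ∈ B ↔ v ∈ B) → ∃ w, G.IsTriangle u v w) ∧
  (∀ a b c d, G.IsDiamond a b c d →
    (({(a, b), (a, c), (b, c), (b, d), (c, d)} : Finset (V × V)).filter
      (fun e => e.1 ∈ B ↔ e.2 ∈ B)).card = 1) ∧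
  (∀ u v, 2 ≤ G.mult u v → ¬ (u ∈ B ↔ v ∈ B))

end Bisection

end Multigraph

namespace Multigraph

variable {V : Type*} [DecidableEq V]

/-- Delete all edges between `x` and `y`. -/
def deleteEdge (G : Multigraph V) (x y : V) : Multigraph V where
  mult u v := if (u = x ∧ v = y) ∨ (u = y ∧ v = x) then 0 else G.mult u v
  symm := by
    intro u v
    have hsy := G.symm u v
    by_cases h : (u = x ∧ v = y) ∨ (u = y ∧ v = x)
    · have h' : (v = x ∧ u = y) ∨ (v = y ∧ u = x) := by tauto
      simp [h, h']
    · have h' : ¬ ((v = x ∧ u = y) ∨ (v = y ∧ u = x)) := by tauto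
      simp [h, h', hsy]
  loopless := by
    intro v
    by_cases h : (v = x ∧ v = y) ∨ (v = y ∧ v = x) <;> simp [h, G.loopless]

/-- The diamond reduction: delete the diamond vertices `a b c d` and add one new edge
between the outside neighbours `x` and `y`. -/
def diamondReduce (G : Multigraph V) (a b c d x y : V) :
    Multigraph {v : V // v ∉ ({a, b, c, d} : Finset V)} where
  mult u v := if u.1 ≠ v.1 ∧ ((u.1 = x ∧ v.1 = y) ∨ (u.1 = y ∧ v.1 = x))
    then G.mult u.1 v.1 + 1 else G.mult u.1 v.1
  symm := by
    intro u v
    have hsy := G.symm u.1 v.1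
    by_cases h : u.1 ≠ v.1 ∧ ((u.1 = x ∧ v.1 = y) ∨ (u.1 = y ∧ v.1 = x))
    · have h' : v.1 ≠ u.1 ∧ ((v.1 = x ∧ u.1 = y) ∨ (v.1 = y ∧ u.1 = x)) := by tauto
      simp [h, h', hsy]
    · have h' : ¬ (v.1 ≠ u.1 ∧ ((v.1 = x ∧ u.1 = y) ∨ (v.1 = y ∧ u.1 = x))) := by tauto
      simp [h, h', hsy]
  loopless := by
    intro v
    simp [G.loopless]

/-- A ring of two diamonds: two vertex-disjoint diamonds covering all of `V`, joined
cyclically by two edges between their degree-2 vertices. -/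
def IsRingOfTwoDiamonds (G : Multigraph V) : Prop :=
  ∃ a₁ b₁ c₁ d₁ a₂ b₂ c₂ d₂ : V,
    ([a₁, b₁, c₁, d₁, a₂, b₂, c₂, d₂] : List V).Nodup ∧
    (∀ v : V, v ∈ [a₁, b₁, c₁, d₁, a₂, b₂, c₂, d₂]) ∧
    G.IsDiamond a₁ b₁ c₁ d₁ ∧ G.IsDiamond a₂ b₂ c₂ d₂ ∧
    G.mult d₁ a₂ = 1 ∧ G.mult d₂ a₁ = 1

end Multigraph

namespace Multigraph

section Aux

variable {V : Type*} [Fintype V] [DecidableEq V] {G : Multigraph V}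

lemma perm_bc (w x y z : V) : ({w, y, x, z} : Finset V) = {w, x, y, z} := by
  ext u; simp only [Finset.mem_insert, Finset.mem_singleton]; tauto

lemma perm_ad (w x y z : V) : ({z, x, y, w} : Finset V) = {w, x, y, z} := by
  ext u; simp only [Finset.mem_insert, Finset.mem_singleton]; tauto

lemma swap_bc {a b c d : V} (h : G.IsDiamond a b c d) : G.IsDiamond a c b d := by
  obtain ⟨h1, h2, h3, h4, h5, h6, m1, m2, m3, m4, m5, m6⟩ := h
  exact ⟨h2, h1, h3, h4.symm, h6, h5, m1, m3, m2, by rw [G.symm]; exact m4, m6, m5⟩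

lemma swap_ad {a b c d : V} (h : G.IsDiamond a b c d) : G.IsDiamond d b c a := by
  obtain ⟨h1, h2, h3, h4, h5, h6, m1, m2, m3, m4, m5, m6⟩ := h
  exact ⟨h5.symm, h6.symm, h3.symm, h4, h1.symm, h2.symm, by rw [G.symm]; exact m1,
    by rw [G.symm]; exact m5, by rw [G.symm]; exact m6, m4,
    by rw [G.symm]; exact m2, by rw [G.symm]; exact m3⟩

lemma inner_nbhd (hcubic : G.IsCubic) {a b c d : V} (h : G.IsDiamond a b c d) (u : V) :
    0 < G.mult b u ↔ u = a ∨ u = c ∨ u = d := by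
  obtain ⟨hab, hac, had, hbc, hbd, hcd, m_ad, m_ab, m_ac, m_bc, m_bd, m_cd⟩ := h
  have hba : G.mult b a = 1 := by rw [G.symm]; exact m_ab
  have hdeg : ∑ w, G.mult b w = 3 := hcubic b
  have hsum : ∑ w ∈ ({a, c, d} : Finset V), G.mult b w = 3 := by
    rw [Finset.sum_insert (by simp [hac, had]), Finset.sum_insert (by simp [hcd]),
      Finset.sum_singleton, hba, m_bc, m_bd]
    omega
  have hrest : ∀ w, w ∉ ({a, c, d} : Finset V) → G.mult b w = 0 := by
    have h0 : ∑ w ∈ Finset.univ \ ({a, c, d} : Finset V), G.mult b w = 0 := by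
      have := Finset.sum_sdiff (f := G.mult b) (Finset.subset_univ ({a, c, d} : Finset V))
      omega
    intro w hw
    exact Finset.sum_eq_zero_iff.mp h0 w (by simp [hw])
  constructor
  · intro hpos
    by_contra hcon
    push_neg at hcon
    have := hrest u (by simp [hcon.1, hcon.2.1, hcon.2.2])
    omega
  · rintro (rfl | rfl | rfl) <;> omega

lemma outer_two (hcubic : G.IsCubic) {a b c d : V} (h : G.IsDiamond a b c d)
    {u w : V} (hu : 0 < G.mult a u) (hw : 0 < G.mult a w) (huw : u ≠ w) :
    u = b ∨ u = c ∨ w = b ∨ w = c := by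
  by_contra hcon
  push_neg at hcon
  obtain ⟨hub, huc, hwb, hwc⟩ := hcon
  obtain ⟨hab, hac, had, hbc, hbd, hcd, m_ad, m_ab, m_ac, m_bc, m_bd, m_cd⟩ := h
  have hdeg : ∑ x, G.mult a x = 3 := hcubic a
  have hsum : ∑ x ∈ ({b, c, u, w} : Finset V), G.mult a x = G.mult a b + G.mult a c
      + G.mult a u + G.mult a w := by
    rw [Finset.sum_insert (by simp [hbc, Ne.symm hub, Ne.symm hwb]),
      Finset.sum_insert (by simp [Ne.symm huc, Ne.symm hwc]),
      Finset.sum_insert (by simp [huw]), Finset.sum_singleton]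
    ring
  have hle : ∑ x ∈ ({b, c, u, w} : Finset V), G.mult a x ≤ 3 := by
    rw [← hdeg]
    exact Finset.sum_le_sum_of_subset (Finset.subset_univ _)
  omega

lemma diamond_set_eq (hcubic : G.IsCubic) {a b c d : V} (h : G.IsDiamond a b c d) :
    ({a, b, c, d} : Finset V) = insert b (Finset.univ.filter fun u => 0 < G.mult b u) := by
  ext u
  simp only [Finset.mem_insert, Finset.mem_singleton, Finset.mem_filter, Finset.mem_univ,
    true_and, inner_nbhd hcubic h]
  tauto

lemma inner_inner (hcubic : G.IsCubic) {a b c d a' b' c' d' : V}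
    (h : G.IsDiamond a b c d) (h' : G.IsDiamond a' b' c' d') (e : b = b') :
    ({a, b, c, d} : Finset V) = {a', b', c', d'} := by
  rw [diamond_set_eq hcubic h, diamond_set_eq hcubic h', e]

lemma inner_outer (hcubic : G.IsCubic) {a b c d a' b' c' d' : V}
    (h : G.IsDiamond a b c d) (h' : G.IsDiamond a' b' c' d') (e : b = a') :
    ({a, b, c, d} : Finset V) = {a', b', c', d'} := by
  have m'_ab : G.mult a' b' = 1 := h'.2.2.2.2.2.2.2.1
  have m'_ac : G.mult a' c' = 1 := h'.2.2.2.2.2.2.2.2.1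
  have m'_bc : G.mult b' c' = 1 := h'.2.2.2.2.2.2.2.2.2.1
  have hbc' : b' ≠ c' := h'.2.2.2.1
  have m_ad : G.mult a d = 0 := h.2.2.2.2.2.2.1
  have hb' : b' = a ∨ b' = c ∨ b' = d :=
    (inner_nbhd hcubic h b').mp (by rw [e]; omega)
  have hc' : c' = a ∨ c' = c ∨ c' = d :=
    (inner_nbhd hcubic h c').mp (by rw [e]; omega)
  rcases hb' with rfl | rfl | rfl
  · rcases hc' with rfl | rfl | rfl
    · exact absurd rfl hbc'
    · exact (perm_bc _ _ _ _).symm.trans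
        ((inner_inner hcubic (swap_bc h) (swap_bc h') rfl).trans (perm_bc _ _ _ _))
    · rw [m_ad] at m'_bc; omega
  · exact (perm_bc _ _ _ _).symm.trans (inner_inner hcubic (swap_bc h) h' rfl)
  · rcases hc' with rfl | rfl | rfl
    · rw [G.symm, m_ad] at m'_bc; omega
    · exact (perm_bc _ _ _ _).symm.trans
        ((inner_inner hcubic (swap_bc h) (swap_bc h') rfl).trans (perm_bc _ _ _ _))
    · exact absurd rfl hbc'

lemma inner_mem (hcubic : G.IsCubic) {a b c d a' b' c' d' : V}
    (h : G.IsDiamond a b c d) (h' : G.IsDiamond a' b' c' d')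
    (hv : b = a' ∨ b = b' ∨ b = c' ∨ b = d') :
    ({a, b, c, d} : Finset V) = {a', b', c', d'} := by
  rcases hv with e | e | e | e
  · exact inner_outer hcubic h h' e
  · exact inner_inner hcubic h h' e
  · exact (inner_inner hcubic h (swap_bc h') e).trans (perm_bc _ _ _ _)
  · exact (inner_outer hcubic h (swap_ad h') e).trans (perm_ad _ _ _ _)

lemma outer_outer (hcubic : G.IsCubic) {a b c d a' b' c' d' : V}
    (h : G.IsDiamond a b c d) (h' : G.IsDiamond a' b' c' d') (e : a = a') :
    ({a, b, c, d} : Finset V) = {a', b', c', d'} := by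
  have m'_ab : G.mult a' b' = 1 := h'.2.2.2.2.2.2.2.1
  have m'_ac : G.mult a' c' = 1 := h'.2.2.2.2.2.2.2.2.1
  have hbc' : b' ≠ c' := h'.2.2.2.1
  have hb' : 0 < G.mult a b' := by rw [e]; omega
  have hc' : 0 < G.mult a c' := by rw [e]; omega
  rcases outer_two hcubic h hb' hc' hbc' with e2 | e2 | e2 | e2
  · exact (inner_mem hcubic h' h (Or.inr (Or.inl e2))).symm
  · exact (inner_mem hcubic h' h (Or.inr (Or.inr (Or.inl e2)))).symm
  · exact ((inner_mem hcubic (swap_bc h') h (Or.inr (Or.inl e2))).symm).trans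
      (perm_bc _ _ _ _)
  · exact ((inner_mem hcubic (swap_bc h') h (Or.inr (Or.inr (Or.inl e2)))).symm).trans
      (perm_bc _ _ _ _)

end Aux

end Multigraph

/-- In a connected claw-free cubic multigraph that is not `K₄`, any two
distinct diamonds are vertex-disjoint. -/
theorem stmt3 {V : Type*} [Fintype V] [DecidableEq V] (G : Multigraph V)
    (hconn : G.Connected) (hclaw : G.IsClawFree) (hcubic : G.IsCubic)
    (hK4 : ¬ G.IsK4) :
    ∀ s ∈ G.diamondSets, ∀ t ∈ G.diamondSets, s ≠ t → Disjoint s t := by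
  intro s hs t ht hne
  obtain ⟨a, b, c, d, rfl, hd⟩ := hs
  obtain ⟨a', b', c', d', rfl, hd'⟩ := ht
  by_contra hdis
  obtain ⟨v, hv1, hv2⟩ := Finset.not_disjoint_iff.mp hdis
  apply hne
  simp only [Finset.mem_insert, Finset.mem_singleton] at hv1 hv2
  rcases hv1 with rfl | rfl | rfl | rfl
  · rcases hv2 with e | e | e | e
    · exact Multigraph.outer_outer hcubic hd hd' e
    · exact (Multigraph.inner_mem hcubic hd' hd (Or.inl e.symm)).symm
    · exact ((Multigraph.inner_mem hcubic (Multigraph.swap_bc hd') hd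
        (Or.inl e.symm)).symm).trans (Multigraph.perm_bc _ _ _ _)
    · exact (Multigraph.outer_outer hcubic hd (Multigraph.swap_ad hd') e).trans
        (Multigraph.perm_ad _ _ _ _)
  · exact Multigraph.inner_mem hcubic hd hd' hv2
  · exact (Multigraph.perm_bc _ _ _ _).symm.trans
      (Multigraph.inner_mem hcubic (Multigraph.swap_bc hd) hd' hv2)
  · rcases hv2 with e | e | e | e
    · exact (Multigraph.perm_ad _ _ _ _).symm.trans
        (Multigraph.outer_outer hcubic (Multigraph.swap_ad hd) hd' e)
    · exact (Multigraph.inner_mem hcubic hd' hd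
        (Or.inr (Or.inr (Or.inr e.symm)))).symm
    · exact ((Multigraph.inner_mem hcubic (Multigraph.swap_bc hd') hd
        (Or.inr (Or.inr (Or.inr e.symm)))).symm).trans (Multigraph.perm_bc _ _ _ _)
    · exact (Multigraph.perm_ad _ _ _ _).symm.trans
        ((Multigraph.outer_outer hcubic (Multigraph.swap_ad hd)
          (Multigraph.swap_ad hd') e).trans (Multigraph.perm_ad _ _ _ _))
end

section
/- A connected cubic multigraph is claw-free if and only if every vertex belongs to a triangle, a trumpet, or a digon. -/
section Aux

variable {V : Type*} [Fintype V] [DecidableEq V]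

lemma pair_le_sum (f : V → ℕ) {x y : V} (hxy : x ≠ y) : f x + f y ≤ ∑ u, f u := by
  have h : ({x, y} : Finset V).sum f ≤ ∑ u, f u :=
    Finset.sum_le_sum_of_subset (Finset.subset_univ _)
  rwa [Finset.sum_insert (by simp [hxy]), Finset.sum_singleton] at h

lemma quad_le_sum (f : V → ℕ) {a b d u : V} (hab : a ≠ b) (had : a ≠ d) (hau : a ≠ u)
    (hbd : b ≠ d) (hbu : b ≠ u) (hdu : d ≠ u) :
    f a + f b + f d + f u ≤ ∑ x, f x := by
  have h : ({a, b, d, u} : Finset V).sum f ≤ ∑ x, f x :=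
    Finset.sum_le_sum_of_subset (Finset.subset_univ _)
  rw [Finset.sum_insert (by simp [hab, had, hau]), Finset.sum_insert (by simp [hbd, hbu]),
    Finset.sum_insert (by simp [hdu]), Finset.sum_singleton] at h
  omega

lemma tri_or_trumpet (G : Multigraph V) (hcubic : G.IsCubic) (v a b : V)
    (hva : G.mult v a = 1) (hvb : G.mult v b = 1) (hab : a ≠ b) (hpos : 0 < G.mult a b) :
    (∃ p q, G.IsTriangle v p q) ∨ (∃ p q, G.IsTrumpet p q v) := by
  have hvna : v ≠ a := fun h => by rw [h, G.loopless] at hva; exact one_ne_zero hva.symm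
  have hvnb : v ≠ b := fun h => by rw [h, G.loopless] at hvb; exact one_ne_zero hvb.symm
  have hav : G.mult a v = 1 := by rw [G.symm a v]; exact hva
  have hbv : G.mult b v = 1 := by rw [G.symm b v]; exact hvb
  have hle : G.mult a v + G.mult a b ≤ 3 := by
    have h := pair_le_sum (G.mult a) hvnb
    have hd : ∑ u, G.mult a u = 3 := hcubic a
    omega
  have h2 : G.mult a b ≤ 2 := by omega
  rcases Nat.lt_or_ge (G.mult a b) 2 with h1 | h1
  · left
    exact ⟨a, b, hvna, hvnb, hab, hva, hvb, by omega⟩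
  · right
    exact ⟨a, b, hab, hvna.symm, hvnb.symm, by omega, hav, hbv⟩

end Aux

/-- A connected cubic multigraph is claw-free iff every vertex belongs to a
triangle, a trumpet or a digon. -/
theorem stmt5 {V : Type*} [Fintype V] [DecidableEq V] (G : Multigraph V)
    (hconn : G.Connected) (hcubic : G.IsCubic) :
    G.IsClawFree ↔
      ∀ v : V, (∃ a b, G.IsTriangle v a b) ∨
        (∃ a b, G.IsTrumpet v a b ∨ G.IsTrumpet a b v) ∨
        (∃ u, G.IsDigon v u) := by
  constructor
  · intro hcf v
    by_cases hdig : ∃ u, 2 ≤ G.mult v u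
    · obtain ⟨u, hu⟩ := hdig
      refine Or.inr (Or.inr ⟨u, fun h => ?_, hu⟩)
      rw [h, G.loopless] at hu; omega
    · push_neg at hdig
      set N : Finset V := Finset.univ.filter (fun u => G.mult v u = 1) with hNdef
      have key : ∑ u, G.mult v u = N.card := by
        rw [← Finset.sum_filter_add_sum_filter_not Finset.univ (fun u => G.mult v u = 1)]
        have h1 : ∑ u ∈ N, G.mult v u = N.card := by
          rw [Finset.card_eq_sum_ones]
          refine Finset.sum_congr rfl fun x hx => ?_
          exact (Finset.mem_filter.mp hx).2
        have h2 : ∑ u ∈ Finset.univ.filter (fun u => ¬ G.mult v u = 1), G.mult v u = 0 := by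
          refine Finset.sum_eq_zero fun x hx => ?_
          have hne := (Finset.mem_filter.mp hx).2
          have := hdig x
          omega
        rw [← hNdef] at *
        omega
      have hcard : N.card = 3 := by rw [← key]; exact hcubic v
      obtain ⟨a, b, d, hab, had, hbd, hN⟩ := Finset.card_eq_three.mp hcard
      have hma : G.mult v a = 1 := by
        have : a ∈ N := by rw [hN]; simp
        exact (Finset.mem_filter.mp this).2
      have hmb : G.mult v b = 1 := by
        have : b ∈ N := by rw [hN]; simp
        exact (Finset.mem_filter.mp this).2
      have hmd : G.mult v d = 1 := by
        have : d ∈ N := by rw [hN]; simp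
        exact (Finset.mem_filter.mp this).2
      have hvna : v ≠ a := fun h => by rw [h, G.loopless] at hma; exact one_ne_zero hma.symm
      have hvnb : v ≠ b := fun h => by rw [h, G.loopless] at hmb; exact one_ne_zero hmb.symm
      have hvnd : v ≠ d := fun h => by rw [h, G.loopless] at hmd; exact one_ne_zero hmd.symm
      by_cases h1 : 0 < G.mult a b
      · rcases tri_or_trumpet G hcubic v a b hma hmb hab h1 with h | ⟨p, q, ht⟩
        · exact Or.inl h
        · exact Or.inr (Or.inl ⟨p, q, Or.inr ht⟩)
      by_cases h2 : 0 < G.mult a d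
      · rcases tri_or_trumpet G hcubic v a d hma hmd had h2 with h | ⟨p, q, ht⟩
        · exact Or.inl h
        · exact Or.inr (Or.inl ⟨p, q, Or.inr ht⟩)
      by_cases h3 : 0 < G.mult b d
      · rcases tri_or_trumpet G hcubic v b d hmb hmd hbd h3 with h | ⟨p, q, ht⟩
        · exact Or.inl h
        · exact Or.inr (Or.inl ⟨p, q, Or.inr ht⟩)
      exact absurd ⟨v, a, b, d, hvna, hvnb, hvnd, hab, had, hbd, hma, hmb, hmd,
        by omega, by omega, by omega⟩ hcf
  · rintro h ⟨c, a, b, d, hca, hcb, hcd, hab, had, hbd, m1, m2, m3, z1, z2, z3⟩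
    have hdeg := hcubic c
    have hz : ∀ u, u ≠ a → u ≠ b → u ≠ d → G.mult c u = 0 := by
      intro u hua hub hud
      have h4 := quad_le_sum (G.mult c) hab had (Ne.symm hua) hbd (Ne.symm hub) (Ne.symm hud)
      have hd : ∑ x, G.mult c x = 3 := hdeg
      omega
    have hmem : ∀ p, 0 < G.mult c p → p = a ∨ p = b ∨ p = d := by
      intro p hp
      by_contra hcon
      push_neg at hcon
      have := hz p hcon.1 hcon.2.1 hcon.2.2
      omega
    have s1 := G.symm a b
    have s2 := G.symm a d
    have s3 := G.symm b d
    rcases h c with ⟨p, q, hcp, hcq, hpq, mcp, mcq, mpq⟩ |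
        ⟨p, q, ⟨hcp, hcq, hpq, mcp, mcq, mpq⟩ | ⟨hpq, hpc, hqc, mpq, mpc, mqc⟩⟩ | ⟨u, hne, h2⟩
    · rcases hmem p (by omega) with rfl | rfl | rfl <;>
        rcases hmem q (by omega) with rfl | rfl | rfl <;>
        first | exact absurd rfl hpq | omega
    · rcases hmem p (by omega) with rfl | rfl | rfl <;> omega
    · have mcp : G.mult c p = 1 := by rw [G.symm c p]; exact mpc
      have mcq : G.mult c q = 1 := by rw [G.symm c q]; exact mqc
      rcases hmem p (by omega) with rfl | rfl | rfl <;>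
        rcases hmem q (by omega) with rfl | rfl | rfl <;>
        first | exact absurd rfl hpq | omega
    · rcases hmem u (by omega) with rfl | rfl | rfl <;> omega
end

section
/- Every desired bisection of a connected claw-free cubic multigraph (not isomorphic to K4) is a 2-bisection. -/
namespace Multigraph

section Aux
variable {V : Type*} [Fintype V] [DecidableEq V]

private lemma key_matching (G : Multigraph V) (hcubic : G.IsCubic) (B : Finset V)
    (hdes : G.IsDesired B) :
    ∀ v u w, G.Adj v u → G.Adj v w → u ≠ w → (v ∈ B ↔ u ∈ B) → (v ∈ B ↔ w ∈ B) → False := by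
  obtain ⟨-, hDB1, hDB2, hDB3, hDB4⟩ := hdes
  intro v u w hvu hvw huw hm1 hm2
  obtain ⟨hvu', hvu0⟩ := hvu
  obtain ⟨hvw', hvw0⟩ := hvw
  have hmu : G.mult v u = 1 := by
    rcases Nat.lt_or_ge (G.mult v u) 2 with h | h
    · omega
    · exact absurd hm1 (hDB4 v u h)
  have hmw : G.mult v w = 1 := by
    rcases Nat.lt_or_ge (G.mult v w) 2 with h | h
    · omega
    · exact absurd hm2 (hDB4 v w h)
  obtain ⟨t, ht⟩ := hDB2 v u ⟨hvu', hvu0⟩ hm1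
  obtain ⟨s, hs⟩ := hDB2 v w ⟨hvw', hvw0⟩ hm2
  obtain ⟨-, hvt', hut', -, hvtm, hutm⟩ := ht
  obtain ⟨-, hvs', hws', -, hvsm, hwsm⟩ := hs
  have hmuw : u ∈ B ↔ w ∈ B := hm1.symm.trans hm2
  have h2uw : G.mult u w ≤ 1 := by
    by_contra h
    exact hDB4 u w (by omega) hmuw
  have noTri : G.mult u w ≠ 1 := by
    intro huw1
    have htri : G.IsTriangle v u w := ⟨hvu', hvw', huw, hmu, hmw, huw1⟩
    have h1 := hDB1 v u w htri
    have hsub : ({(v, u), (v, w)} : Finset (V × V)) ⊆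
        Finset.filter (fun e => e.1 ∈ B ↔ e.2 ∈ B)
          ({(v, u), (v, w), (u, w)} : Finset (V × V)) := by
      intro e he
      simp only [Finset.mem_insert, Finset.mem_singleton] at he
      rcases he with rfl | rfl
      · exact Finset.mem_filter.mpr ⟨by simp, hm1⟩
      · exact Finset.mem_filter.mpr ⟨by simp, hm2⟩
    have hle := Finset.card_le_card hsub
    rw [Finset.card_pair (by simp [Prod.ext_iff, huw])] at hle
    omega
  have huw0 : G.mult u w = 0 := by omega
  have htw : t ≠ w := by
    intro h
    exact noTri (h ▸ hutm)
  have hsu : s ≠ u := by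
    intro h
    apply noTri
    rw [G.symm u w]
    exact h ▸ hwsm
  have hst : s = t := by
    by_contra hst
    have hdeg := hcubic v
    have hsum : ∑ x ∈ ({u, w, t, s} : Finset V), G.mult v x ≤ ∑ x, G.mult v x :=
      Finset.sum_le_sum_of_subset (Finset.subset_univ _)
    have h4 : ∑ x ∈ ({u, w, t, s} : Finset V), G.mult v x = 4 := by
      rw [Finset.sum_insert (by simp [huw, hut', Ne.symm hsu]),
        Finset.sum_insert (by simp [Ne.symm htw, hws']),
        Finset.sum_insert (by simp only [Finset.mem_singleton]; exact fun h => hst h.symm),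
        Finset.sum_singleton, hmu, hmw, hvtm, hvsm]
      norm_num
    rw [h4] at hsum
    have : G.degree v = ∑ x, G.mult v x := rfl
    omega
  subst hst
  have hdia : G.IsDiamond u v s w :=
    ⟨Ne.symm hvu', hut', huw, hvt', hvw', htw, huw0, (G.symm u v).trans hmu, hutm, hvtm, hmw,
      (G.symm s w).trans hwsm⟩
  have h1 := hDB3 u v s w hdia
  have hsub : ({(u, v), (v, w)} : Finset (V × V)) ⊆
      Finset.filter (fun e => e.1 ∈ B ↔ e.2 ∈ B)
        ({(u, v), (u, s), (v, s), (v, w), (s, w)} : Finset (V × V)) := by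
    intro e he
    simp only [Finset.mem_insert, Finset.mem_singleton] at he
    rcases he with rfl | rfl
    · exact Finset.mem_filter.mpr ⟨by simp, hm1.symm⟩
    · exact Finset.mem_filter.mpr ⟨by simp, hm2⟩
  have hle := Finset.card_le_card hsub
  rw [Finset.card_pair (by simp [Prod.ext_iff, Ne.symm hvu'])] at hle
  omega

private lemma small_of_matching (H : SimpleGraph V)
    (hH : ∀ x y z, H.Adj x y → H.Adj x z → y = z) (v : V) :
    {u | H.Reachable v u}.ncard ≤ 2 := by
  have hw : ∀ {a b : V}, H.Walk a b → b = a ∨ H.Adj a b := by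
    intro a b w
    induction w with
    | nil => exact Or.inl rfl
    | cons h p ih =>
      rcases ih with rfl | hb
      · exact Or.inr h
      · exact Or.inl (hH _ _ _ hb h.symm)
  have hsub : {u | H.Reachable v u} ⊆ insert v {u | H.Adj v u} := by
    intro u hu
    obtain ⟨w⟩ := hu
    rcases hw w with rfl | ha
    · exact Set.mem_insert _ _
    · exact Set.mem_insert_of_mem _ ha
  have hsing : {u | H.Adj v u}.Subsingleton := fun a ha b hb => hH v a b ha hb
  have h1 : {u | H.Adj v u}.ncard ≤ 1 := by
    rcases hsing.eq_empty_or_singleton with h | ⟨a, h⟩ <;> simp [h]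
  have := Set.ncard_le_ncard hsub (Set.toFinite _)
  have := Set.ncard_insert_le v {u | H.Adj v u}
  omega

end Aux

end Multigraph

/-- A desired bisection of a connected claw-free cubic multigraph that is not
`K₄` is a 2-bisection. -/
theorem stmt6 {V : Type*} [Fintype V] [DecidableEq V] (G : Multigraph V)
    (hconn : G.Connected) (hclaw : G.IsClawFree) (hcubic : G.IsCubic)
    (hK4 : ¬ G.IsK4) (B : Finset V) (hdes : G.IsDesired B) :
    G.IsKBisection B 2 := by
  obtain hbis := hdes.1
  have key := Multigraph.key_matching G hcubic B hdes
  refine ⟨hbis, ?_, ?_⟩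
  · intro v _
    apply Multigraph.small_of_matching
    intro x y z hxy hxz
    by_contra hne
    exact key x y z ⟨hxy.1, hxy.2.2.2⟩ ⟨hxz.1, hxz.2.2.2⟩ hne
      (iff_of_true hxy.2.1 hxy.2.2.1) (iff_of_true hxz.2.1 hxz.2.2.1)
  · intro v _
    apply Multigraph.small_of_matching
    intro x y z hxy hxz
    by_contra hne
    exact key x y z ⟨hxy.1, hxy.2.2.2⟩ ⟨hxz.1, hxz.2.2.2⟩ hne
      (iff_of_false (Finset.mem_compl.mp hxy.2.1) (Finset.mem_compl.mp hxy.2.2.1))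
      (iff_of_false (Finset.mem_compl.mp hxz.2.1) (Finset.mem_compl.mp hxz.2.2.1))
end

section
/- Let G be a connected claw-free cubic multigraph different from K4, containing a diamond on vertices a,b,c,d with ad not an edge, and let x, y be the outside neighbours of a and d. Then the pair of edges {xa, dy} is an edge-cut of G. -/
/-- The two edges `xa` and `dy` leaving a diamond form an edge-cut. -/
theorem stmt9 {V : Type*} [Fintype V] [DecidableEq V] (G : Multigraph V)
    (hconn : G.Connected) (hclaw : G.IsClawFree) (hcubic : G.IsCubic)
    (hK4 : ¬ G.IsK4) (a b c d x y : V) (hdiam : G.IsDiamond a b c d)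
    (hx : G.Adj a x) (hxo : x ∉ ({a, b, c, d} : Finset V))
    (hy : G.Adj d y) (hyo : y ∉ ({a, b, c, d} : Finset V)) :
    ¬ ((G.deleteEdge x a).deleteEdge d y).Connected := by
  intro hconn'
  obtain ⟨hab, hac, had, hbc, hbd, hcd, mad, mab, mac, mbc, mbd, mcd⟩ := hdiam
  simp only [Finset.mem_insert, Finset.mem_singleton, not_or] at hxo hyo
  obtain ⟨hxa, hxb, hxc, hxd⟩ := hxo
  obtain ⟨hya, hyb, hyc, hyd⟩ := hyo
  set G' := (G.deleteEdge x a).deleteEdge d y with hG'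
  have key : ∀ u p q r : V, p ≠ q → p ≠ r → q ≠ r →
      0 < G.mult u p → 0 < G.mult u q → 0 < G.mult u r →
      ∀ v, 0 < G.mult u v → v = p ∨ v = q ∨ v = r := by
    intro u p q r hpq hpr hqr hp hq hr v hv
    by_contra hnv
    push_neg at hnv
    obtain ⟨h1, h2, h3⟩ := hnv
    have hdeg := hcubic u
    have hsum : ∑ w ∈ ({v, p, q, r} : Finset V), G.mult u w ≤ G.degree u :=
      Finset.sum_le_sum_of_subset (Finset.subset_univ _)
    rw [hdeg] at hsum
    have heq : ∑ w ∈ ({v, p, q, r} : Finset V), G.mult u w =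
        G.mult u v + (G.mult u p + (G.mult u q + G.mult u r)) := by
      rw [Finset.sum_insert (by simp [h1, h2, h3]),
        Finset.sum_insert (by simp [hpq, hpr]),
        Finset.sum_insert (by simp [hqr]), Finset.sum_singleton]
    omega
  have hax : 0 < G.mult a x := hx.2
  have hdy : 0 < G.mult d y := hy.2
  have pos : ∀ m : ℕ, m = 1 → 0 < m := by intro m h; omega
  have na : ∀ v, 0 < G.mult a v → v = b ∨ v = c ∨ v = x :=
    key a b c x hbc (fun h => hxb h.symm) (fun h => hxc h.symm)
      (pos _ mab) (pos _ mac) hax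
  have nb : ∀ v, 0 < G.mult b v → v = a ∨ v = c ∨ v = d :=
    key b a c d hac had hcd
      (by rw [G.symm b a, mab]; norm_num)
      (pos _ mbc) (pos _ mbd)
  have nc : ∀ v, 0 < G.mult c v → v = a ∨ v = b ∨ v = d :=
    key c a b d hab had hbd
      (by rw [G.symm c a, mac]; norm_num)
      (by rw [G.symm c b, mbc]; norm_num)
      (pos _ mcd)
  have nd : ∀ v, 0 < G.mult d v → v = b ∨ v = c ∨ v = y :=
    key d b c y hbc (fun h => hyb h.symm) (fun h => hyc h.symm)
      (by rw [G.symm d b, mbd]; norm_num)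
      (by rw [G.symm d c, mcd]; norm_num) hdy
  have hGm : ∀ u v : V, 0 < G'.mult u v →
      0 < G.mult u v ∧ ¬ ((u = x ∧ v = a) ∨ (u = a ∧ v = x)) ∧
      ¬ ((u = d ∧ v = y) ∨ (u = y ∧ v = d)) := by
    intro u v h
    simp only [hG', Multigraph.deleteEdge] at h
    split_ifs at h with h1 h2
    · exact absurd h (by omega)
    · exact absurd h (by omega)
    · exact ⟨h, h2, h1⟩
  have closed : ∀ u v : V, (u = a ∨ u = b ∨ u = c ∨ u = d) →
      G'.toSimple.Adj u v → (v = a ∨ v = b ∨ v = c ∨ v = d) := by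
    intro u v hu hadj
    obtain ⟨hne, hm⟩ := hadj
    obtain ⟨h0, hnxa, hndy⟩ := hGm u v hm
    rcases hu with rfl | rfl | rfl | rfl
    · rcases na v h0 with rfl | rfl | rfl
      · exact Or.inr (Or.inl rfl)
      · exact Or.inr (Or.inr (Or.inl rfl))
      · exact absurd (Or.inr ⟨rfl, rfl⟩) hnxa
    · rcases nb v h0 with rfl | rfl | rfl
      · exact Or.inl rfl
      · exact Or.inr (Or.inr (Or.inl rfl))
      · exact Or.inr (Or.inr (Or.inr rfl))
    · rcases nc v h0 with rfl | rfl | rfl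
      · exact Or.inl rfl
      · exact Or.inr (Or.inl rfl)
      · exact Or.inr (Or.inr (Or.inr rfl))
    · rcases nd v h0 with rfl | rfl | rfl
      · exact Or.inr (Or.inl rfl)
      · exact Or.inr (Or.inr (Or.inl rfl))
      · exact absurd (Or.inl ⟨rfl, rfl⟩) hndy
  have reach : ∀ u v : V, G'.toSimple.Walk u v →
      (u = a ∨ u = b ∨ u = c ∨ u = d) → (v = a ∨ v = b ∨ v = c ∨ v = d) := by
    intro u v p
    induction p with
    | nil => exact id
    | cons h _ ih => exact fun hu => ih (closed _ _ hu h)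
  obtain ⟨p⟩ := hconn'.preconnected a x
  rcases reach a x p (Or.inl rfl) with h | h | h | h
  exacts [hxa h, hxb h, hxc h, hxd h]
end

section
/- Let G be a connected claw-free cubic multigraph different from K4 with a diamond on a,b,c,d (ad not an edge), outside neighbours x of a and y of d. Let G' be obtained from G by deleting a,b,c,d and adding a new edge xy. Then G' is a connected claw-free cubic multigraph. -/
/-- The diamond reduction of a connected claw-free cubic multigraph (not
`K₄`) is again a connected claw-free cubic multigraph. -/
theorem stmt10 {V : Type*} [Fintype V] [DecidableEq V] (G : Multigraph V)
    (hconn : G.Connected) (hclaw : G.IsClawFree) (hcubic : G.IsCubic)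
    (hK4 : ¬ G.IsK4) (a b c d x y : V) (hdiam : G.IsDiamond a b c d)
    (hx : G.Adj a x) (hxo : x ∉ ({a, b, c, d} : Finset V))
    (hy : G.Adj d y) (hyo : y ∉ ({a, b, c, d} : Finset V)) :
    (G.diamondReduce a b c d x y).Connected ∧
    (G.diamondReduce a b c d x y).IsClawFree ∧
    (G.diamondReduce a b c d x y).IsCubic := by
  classical
  obtain ⟨hab, hac, had, hbc, hbd, hcd, mad, mab, mac, mbc, mbd, mcd⟩ := hdiam
  have hxs := hxo
  have hys := hyo
  simp only [Finset.mem_insert, Finset.mem_singleton, not_or] at hxo hyo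
  obtain ⟨hxa, hxb, hxc, hxd⟩ := hxo
  obtain ⟨hya, hyb, hyc, hyd⟩ := hyo
  have hxa : x ≠ a := hxa
  have hxb : x ≠ b := hxb
  have hxc : x ≠ c := hxc
  have hxd : x ≠ d := hxd
  have hya : y ≠ a := hya
  have hyb : y ≠ b := hyb
  have hyc : y ≠ c := hyc
  have hyd : y ≠ d := hyd
  -- generic sum split
  have split3 : ∀ (f : V → ℕ) (p q r : V), p ≠ q → p ≠ r → q ≠ r →
      ∑ u, f u = f p + f q + f r + ∑ u ∈ ((Finset.univ.erase p).erase q).erase r, f u := by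
    intro f p q r hpq hpr hqr
    rw [← Finset.add_sum_erase _ f (Finset.mem_univ p),
        ← Finset.add_sum_erase _ f (Finset.mem_erase.mpr ⟨hpq.symm, Finset.mem_univ q⟩),
        ← Finset.add_sum_erase _ f (Finset.mem_erase.mpr ⟨hqr.symm,
          Finset.mem_erase.mpr ⟨hpr.symm, Finset.mem_univ r⟩⟩)]
    ring
  -- neighbour structure
  have nbr : ∀ v p q r : V, p ≠ q → p ≠ r → q ≠ r → G.mult v p = 1 → G.mult v q = 1 →
      1 ≤ G.mult v r → G.mult v r = 1 ∧ ∀ w, w ≠ p → w ≠ q → w ≠ r → G.mult v w = 0 := by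
    intro v p q r hpq hpr hqr h1 h2 h3
    have hdeg := hcubic v
    simp only [Multigraph.degree] at hdeg
    rw [split3 (G.mult v) p q r hpq hpr hqr, h1, h2] at hdeg
    have hz : ∑ u ∈ ((Finset.univ.erase p).erase q).erase r, G.mult v u = 0 ∧
        G.mult v r = 1 := by omega
    refine ⟨hz.2, fun w hwp hwq hwr => ?_⟩
    exact (Finset.sum_eq_zero_iff.mp hz.1) w (by simp [Finset.mem_erase, hwp, hwq, hwr])
  obtain ⟨hax1, haw⟩ := nbr a b c x hbc hxb.symm hxc.symm mab mac hx.2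
  obtain ⟨-, hbw⟩ := nbr b a c d hac had hcd ((G.symm b a).trans mab) mbc mbd.ge
  obtain ⟨-, hcw⟩ := nbr c a b d hab had hbd ((G.symm c a).trans mac) ((G.symm c b).trans mbc)
    mcd.ge
  obtain ⟨hdy1, hdw⟩ := nbr d b c y hbc hyb.symm hyc.symm ((G.symm d b).trans mbd)
    ((G.symm d c).trans mcd) hy.2
  -- x ≠ y
  have hxy : x ≠ y := by
    intro he
    subst he
    have hdeg := hcubic x
    simp only [Multigraph.degree] at hdeg
    rw [split3 (G.mult x) a d b had hab hbd.symm, (G.symm x a).trans hax1,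
        (G.symm x d).trans hdy1, (G.symm x b).trans (hbw x hxa hxc hxd)] at hdeg
    have hS : ∑ u ∈ ((Finset.univ.erase a).erase d).erase b, G.mult x u = 1 := by omega
    have hex : ∃ z ∈ ((Finset.univ.erase a).erase d).erase b, G.mult x z ≠ 0 := by
      by_contra h
      push_neg at h
      rw [Finset.sum_eq_zero h] at hS
      omega
    obtain ⟨z, hzS, hz⟩ := hex
    simp only [Finset.mem_erase] at hzS
    obtain ⟨hzb, hzd, hza, -⟩ := hzS
    have hz1 : G.mult x z = 1 := by
      have hle : G.mult x z ≤ 1 := by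
        rw [← hS]
        exact Finset.single_le_sum (fun i _ => Nat.zero_le _)
          (by simp [Finset.mem_erase, hzb, hzd, hza])
      omega
    have hzx : z ≠ x := by
      intro h; subst h; rw [G.loopless] at hz1; omega
    have hzc : z ≠ c := by
      intro h; subst h
      rw [(G.symm x z).trans (hcw x hxa hxb hxd)] at hz1
      omega
    exact hclaw ⟨x, a, d, z, hxa, hxd, hzx.symm, had, hza.symm, hzd.symm,
      (G.symm x a).trans hax1, (G.symm x d).trans hdy1, hz1, mad,
      haw z hzb hzc hzx, hdw z hzb hzc hzx⟩
  set G' := G.diamondReduce a b c d x y with hG'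
  -- mult' facts
  have hmul : ∀ u v : {v : V // v ∉ ({a, b, c, d} : Finset V)},
      ¬((u.1 = x ∧ v.1 = y) ∨ (u.1 = y ∧ v.1 = x)) → G'.mult u v = G.mult u.1 v.1 := by
    intro u v h
    show (if u.1 ≠ v.1 ∧ ((u.1 = x ∧ v.1 = y) ∨ (u.1 = y ∧ v.1 = x)) then G.mult u.1 v.1 + 1
      else G.mult u.1 v.1) = G.mult u.1 v.1
    rw [if_neg (by tauto)]
  have hmulxy : ∀ (u v : {v : V // v ∉ ({a, b, c, d} : Finset V)}),
      ((u.1 = x ∧ v.1 = y) ∨ (u.1 = y ∧ v.1 = x)) → G'.mult u v = G.mult u.1 v.1 + 1 := by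
    intro u v h
    show (if u.1 ≠ v.1 ∧ ((u.1 = x ∧ v.1 = y) ∨ (u.1 = y ∧ v.1 = x)) then G.mult u.1 v.1 + 1
      else G.mult u.1 v.1) = G.mult u.1 v.1 + 1
    rcases h with ⟨h1, h2⟩ | ⟨h1, h2⟩
    · rw [if_pos ⟨by rw [h1, h2]; exact hxy, Or.inl ⟨h1, h2⟩⟩]
    · rw [if_pos ⟨by rw [h1, h2]; exact hxy.symm, Or.inr ⟨h1, h2⟩⟩]
  have hge : ∀ u v : {v : V // v ∉ ({a, b, c, d} : Finset V)},
      G.mult u.1 v.1 ≤ G'.mult u v := by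
    intro u v
    show G.mult u.1 v.1 ≤ (if u.1 ≠ v.1 ∧ ((u.1 = x ∧ v.1 = y) ∨ (u.1 = y ∧ v.1 = x))
      then G.mult u.1 v.1 + 1 else G.mult u.1 v.1)
    split <;> omega
  have rxy : G'.toSimple.Reachable ⟨x, hxs⟩ ⟨y, hys⟩ := by
    refine SimpleGraph.Adj.reachable ⟨fun h => hxy (congrArg Subtype.val h), ?_⟩
    rw [hmulxy ⟨x, hxs⟩ ⟨y, hys⟩ (Or.inl ⟨rfl, rfl⟩)]
    omega
  -- CONNECTED
  have hconn' : G'.Connected := by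
    let f : V → {v : V // v ∉ ({a, b, c, d} : Finset V)} := fun v =>
      if h : v ∉ ({a, b, c, d} : Finset V) then ⟨v, h⟩
      else if v = d then ⟨y, hys⟩ else ⟨x, hxs⟩
    have fval1 : ∀ (w) (h : w ∉ ({a, b, c, d} : Finset V)), f w = ⟨w, h⟩ := fun w h => dif_pos h
    have fa : f a = ⟨x, hxs⟩ := (dif_neg (not_not_intro (by simp))).trans (if_neg had)
    have fd : f d = ⟨y, hys⟩ := (dif_neg (not_not_intro (by simp))).trans (if_pos rfl)
    have fmem : ∀ w, w ∈ ({a, b, c, d} : Finset V) → f w = ⟨x, hxs⟩ ∨ f w = ⟨y, hys⟩ := by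
      intro w hw
      by_cases hwd : w = d
      · right; exact (dif_neg (not_not_intro hw)).trans (if_pos hwd)
      · left; exact (dif_neg (not_not_intro hw)).trans (if_neg hwd)
    have stepOI : ∀ u v : V, u ∉ ({a, b, c, d} : Finset V) → v ∈ ({a, b, c, d} : Finset V) →
        0 < G.mult u v → G'.toSimple.Reachable (f u) (f v) := by
      intro u v hu hv hpos
      have hu' := hu
      simp only [Finset.mem_insert, Finset.mem_singleton, not_or] at hu'
      obtain ⟨hua, hub, huc, hud⟩ := hu'
      simp only [Finset.mem_insert, Finset.mem_singleton] at hv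
      rcases hv with h | h | h | h
      · -- v = a, so u = x
        rw [h] at hpos
        have hux : u = x := by
          by_contra h'
          rw [(G.symm u a).trans (haw u hub huc h')] at hpos
          omega
        rw [h, hux, fval1 x hxs, fa]
      · rw [h] at hpos
        exact absurd ((G.symm u b).trans (hbw u hua huc hud)) (by omega)
      · rw [h] at hpos
        exact absurd ((G.symm u c).trans (hcw u hua hub hud)) (by omega)
      · -- v = d, so u = y
        rw [h] at hpos
        have huy : u = y := by
          by_contra h'
          rw [(G.symm u d).trans (hdw u hub huc h')] at hpos
          omega
        rw [h, huy, fval1 y hys, fd]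
    have step : ∀ u v : V, G.toSimple.Adj u v → G'.toSimple.Reachable (f u) (f v) := by
      rintro u v ⟨hne, hpos⟩
      by_cases hu : u ∈ ({a, b, c, d} : Finset V) <;>
        by_cases hv : v ∈ ({a, b, c, d} : Finset V)
      · rcases fmem u hu with h1 | h1 <;> rcases fmem v hv with h2 | h2 <;> rw [h1, h2] <;>
          first | exact rxy | exact rxy.symm
      · exact (stepOI v u hv hu (by rw [G.symm]; exact hpos)).symm
      · exact stepOI u v hu hv hpos
      · rw [fval1 u hu, fval1 v hv]
        exact SimpleGraph.Adj.reachable ⟨fun h => hne (congrArg Subtype.val h),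
          lt_of_lt_of_le hpos (hge ⟨u, hu⟩ ⟨v, hv⟩)⟩
    have walkrec : ∀ {u v : V}, G.toSimple.Reachable u v →
        G'.toSimple.Reachable (f u) (f v) := by
      intro u v h
      obtain ⟨p⟩ := h
      induction p with
      | nil => exact SimpleGraph.Reachable.refl _
      | cons h p ih => exact (step _ _ h).trans ih
    haveI : Nonempty {v : V // v ∉ ({a, b, c, d} : Finset V)} := ⟨⟨x, hxs⟩⟩
    refine ⟨fun u v => ?_⟩
    have := walkrec (hconn.preconnected u.1 v.1)
    rwa [fval1 u.1 u.2, fval1 v.1 v.2, Subtype.eta, Subtype.eta] at this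
  -- CLAW-FREE
  have hclaw' : G'.IsClawFree := by
    rintro ⟨C, P, Q, R, hCP, hCQ, hCR, hPQ, hPR, hQR, m1, m2, m3, m4, m5, m6⟩
    have vCP : C.1 ≠ P.1 := fun h => hCP (Subtype.ext h)
    have vCQ : C.1 ≠ Q.1 := fun h => hCQ (Subtype.ext h)
    have vCR : C.1 ≠ R.1 := fun h => hCR (Subtype.ext h)
    have vPQ : P.1 ≠ Q.1 := fun h => hPQ (Subtype.ext h)
    have vPR : P.1 ≠ R.1 := fun h => hPR (Subtype.ext h)
    have vQR : Q.1 ≠ R.1 := fun h => hQR (Subtype.ext h)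
    have memc : ∀ w : {v : V // v ∉ ({a, b, c, d} : Finset V)},
        w.1 ≠ a ∧ w.1 ≠ b ∧ w.1 ≠ c ∧ w.1 ≠ d := by
      intro w
      have := w.2
      simp only [Finset.mem_insert, Finset.mem_singleton, not_or] at this
      exact this
    have corex : ∀ p q : V, p ≠ a → p ≠ b → p ≠ c → q ≠ a → q ≠ b → q ≠ c → p ≠ q →
        p ≠ x → q ≠ x → G.mult x p = 1 → G.mult x q = 1 → G.mult p q = 0 → False := by
      intro p q hpa hpb hpc hqa hqb hqc hpq hpx hqx n1 n2 n3
      exact hclaw ⟨x, a, p, q, hxa, hpx.symm, hqx.symm, hpa.symm, hqa.symm, hpq,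
        (G.symm x a).trans hax1, n1, n2, haw p hpb hpc hpx, haw q hqb hqc hqx, n3⟩
    have corey : ∀ p q : V, p ≠ d → p ≠ b → p ≠ c → q ≠ d → q ≠ b → q ≠ c → p ≠ q →
        p ≠ y → q ≠ y → G.mult y p = 1 → G.mult y q = 1 → G.mult p q = 0 → False := by
      intro p q hpd hpb hpc hqd hqb hqc hpq hpy hqy n1 n2 n3
      exact hclaw ⟨y, d, p, q, hyd, hpy.symm, hqy.symm, hpd.symm, hqd.symm, hpq,
        (G.symm y d).trans hdy1, n1, n2, hdw p hpb hpc hpy, hdw q hqb hqc hqy, n3⟩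
    -- leaf pairs never form the pattern {x,y} (their mult' is 0, pattern forces ≥ 1)
    have npat : ∀ u v : {v : V // v ∉ ({a, b, c, d} : Finset V)}, G'.mult u v = 0 →
        ¬((u.1 = x ∧ v.1 = y) ∨ (u.1 = y ∧ v.1 = x)) := by
      intro u v h0 hp
      rw [hmulxy u v hp] at h0
      omega
    have npPQ := npat P Q m4
    have npPR := npat P R m5
    have npQR := npat Q R m6
    by_cases hCx : C.1 = x
    · -- center x; leaves are ≠ x; pick two leaves ≠ y
      have leaf : ∀ L : {v : V // v ∉ ({a, b, c, d} : Finset V)}, G'.mult C L = 1 →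
          L.1 ≠ y → G.mult x L.1 = 1 := by
        intro L hL hLy
        have hp : ¬((C.1 = x ∧ L.1 = y) ∨ (C.1 = y ∧ L.1 = x)) := by
          rw [hCx]
          rintro (⟨-, h⟩ | ⟨h, -⟩)
          · exact hLy h
          · exact hxy h
        rw [hmul C L hp] at hL
        rw [← hCx]; exact hL
      by_cases hPy : P.1 = y
      · have hQy : Q.1 ≠ y := fun h => vPQ (hPy.trans h.symm)
        have hRy : R.1 ≠ y := fun h => vPR (hPy.trans h.symm)
        exact corex Q.1 R.1 (memc Q).1 (memc Q).2.1 (memc Q).2.2.1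
          (memc R).1 (memc R).2.1 (memc R).2.2.1 vQR
          (fun h => vCQ (hCx.trans h.symm)) (fun h => vCR (hCx.trans h.symm))
          (leaf Q m2 hQy) (leaf R m3 hRy)
          (by rw [← hmul Q R npQR]; exact m6)
      · by_cases hQy : Q.1 = y
        · have hRy : R.1 ≠ y := fun h => vQR (hQy.trans h.symm)
          exact corex P.1 R.1 (memc P).1 (memc P).2.1 (memc P).2.2.1
            (memc R).1 (memc R).2.1 (memc R).2.2.1 vPR
            (fun h => vCP (hCx.trans h.symm)) (fun h => vCR (hCx.trans h.symm))
            (leaf P m1 hPy) (leaf R m3 hRy)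
            (by rw [← hmul P R npPR]; exact m5)
        · exact corex P.1 Q.1 (memc P).1 (memc P).2.1 (memc P).2.2.1
            (memc Q).1 (memc Q).2.1 (memc Q).2.2.1 vPQ
            (fun h => vCP (hCx.trans h.symm)) (fun h => vCQ (hCx.trans h.symm))
            (leaf P m1 hPy) (leaf Q m2 hQy)
            (by rw [← hmul P Q npPQ]; exact m4)
    · by_cases hCy : C.1 = y
      · -- center y; pick two leaves ≠ x
        have leaf : ∀ L : {v : V // v ∉ ({a, b, c, d} : Finset V)}, G'.mult C L = 1 →
            L.1 ≠ x → G.mult y L.1 = 1 := by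
          intro L hL hLx
          have hp : ¬((C.1 = x ∧ L.1 = y) ∨ (C.1 = y ∧ L.1 = x)) := by
            rw [hCy]
            rintro (⟨h, -⟩ | ⟨-, h⟩)
            · exact hxy.symm h
            · exact hLx h
          rw [hmul C L hp] at hL
          rw [← hCy]; exact hL
        by_cases hPx : P.1 = x
        · have hQx : Q.1 ≠ x := fun h => vPQ (hPx.trans h.symm)
          have hRx : R.1 ≠ x := fun h => vPR (hPx.trans h.symm)
          exact corey Q.1 R.1 (memc Q).2.2.2 (memc Q).2.1 (memc Q).2.2.1
            (memc R).2.2.2 (memc R).2.1 (memc R).2.2.1 vQR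
            (fun h => vCQ (hCy.trans h.symm)) (fun h => vCR (hCy.trans h.symm))
            (leaf Q m2 hQx) (leaf R m3 hRx)
            (by rw [← hmul Q R npQR]; exact m6)
        · by_cases hQx : Q.1 = x
          · have hRx : R.1 ≠ x := fun h => vQR (hQx.trans h.symm)
            exact corey P.1 R.1 (memc P).2.2.2 (memc P).2.1 (memc P).2.2.1
              (memc R).2.2.2 (memc R).2.1 (memc R).2.2.1 vPR
              (fun h => vCP (hCy.trans h.symm)) (fun h => vCR (hCy.trans h.symm))
              (leaf P m1 hPx) (leaf R m3 hRx)
              (by rw [← hmul P R npPR]; exact m5)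
          · exact corey P.1 Q.1 (memc P).2.2.2 (memc P).2.1 (memc P).2.2.1
              (memc Q).2.2.2 (memc Q).2.1 (memc Q).2.2.1 vPQ
              (fun h => vCP (hCy.trans h.symm)) (fun h => vCQ (hCy.trans h.symm))
              (leaf P m1 hPx) (leaf Q m2 hQx)
              (by rw [← hmul P Q npPQ]; exact m4)
      · -- center not x or y: the claw transfers to G
        have nc : ∀ L : {v : V // v ∉ ({a, b, c, d} : Finset V)},
            ¬((C.1 = x ∧ L.1 = y) ∨ (C.1 = y ∧ L.1 = x)) := by
          rintro L (⟨h, -⟩ | ⟨h, -⟩); exact hCx h; exact hCy h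
        exact hclaw ⟨C.1, P.1, Q.1, R.1, vCP, vCQ, vCR, vPQ, vPR, vQR,
          (hmul C P (nc P)) ▸ m1, (hmul C Q (nc Q)) ▸ m2, (hmul C R (nc R)) ▸ m3,
          (hmul P Q npPQ) ▸ m4, (hmul P R npPR) ▸ m5, (hmul Q R npQR) ▸ m6⟩
  -- CUBIC
  have hcubic' : G'.IsCubic := by
    intro v
    have hFsum : ∀ g : V → ℕ,
        (∑ u : {v : V // v ∉ ({a, b, c, d} : Finset V)}, g u.1) =
        ∑ u ∈ Finset.univ.filter (fun w => w ∉ ({a, b, c, d} : Finset V)), g u :=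
      fun g => (Finset.sum_subtype _ (by intro w; simp) g).symm
    have degconv : G'.degree v =
        ∑ u ∈ Finset.univ.filter (fun w => w ∉ ({a, b, c, d} : Finset V)),
          (if v.1 ≠ u ∧ ((v.1 = x ∧ u = y) ∨ (v.1 = y ∧ u = x)) then G.mult v.1 u + 1
            else G.mult v.1 u) := by
      simp only [Multigraph.degree]
      exact hFsum fun u => (if v.1 ≠ u ∧ ((v.1 = x ∧ u = y) ∨ (v.1 = y ∧ u = x))
        then G.mult v.1 u + 1 else G.mult v.1 u)
    have degsplit : G'.degree v =
        (∑ u ∈ Finset.univ.filter (fun w => w ∉ ({a, b, c, d} : Finset V)), G.mult v.1 u) +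
        ∑ u ∈ Finset.univ.filter (fun w => w ∉ ({a, b, c, d} : Finset V)),
          (if v.1 ≠ u ∧ ((v.1 = x ∧ u = y) ∨ (v.1 = y ∧ u = x)) then 1 else 0) := by
      rw [degconv, ← Finset.sum_add_distrib]
      refine Finset.sum_congr rfl fun u _ => ?_
      split_ifs <;> omega
    have base : (∑ u ∈ Finset.univ.filter (fun w => w ∈ ({a, b, c, d} : Finset V)),
        G.mult v.1 u) +
        (∑ u ∈ Finset.univ.filter (fun w => w ∉ ({a, b, c, d} : Finset V)),
        G.mult v.1 u) = 3 := by
      rw [Finset.sum_filter_add_sum_filter_not]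
      exact hcubic v.1
    have hSsum : ∑ u ∈ Finset.univ.filter (fun w => w ∈ ({a, b, c, d} : Finset V)),
        G.mult v.1 u =
        G.mult v.1 a + G.mult v.1 b + G.mult v.1 c + G.mult v.1 d := by
      rw [Finset.filter_mem_eq_inter, Finset.univ_inter]
      rw [Finset.sum_insert (by simp [hab, hac, had]),
        Finset.sum_insert (by simp [hbc, hbd]), Finset.sum_pair hcd]
      ring
    obtain ⟨hva, hvb, hvc, hvd⟩ : v.1 ≠ a ∧ v.1 ≠ b ∧ v.1 ≠ c ∧ v.1 ≠ d := by
      have := v.2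
      simp only [Finset.mem_insert, Finset.mem_singleton, not_or] at this
      exact this
    have hmb : G.mult v.1 b = 0 := (G.symm v.1 b).trans (hbw v.1 hva hvc hvd)
    have hmc : G.mult v.1 c = 0 := (G.symm v.1 c).trans (hcw v.1 hva hvb hvd)
    by_cases hvx : v.1 = x
    · have hma : G.mult v.1 a = 1 := by rw [hvx]; exact (G.symm x a).trans hax1
      have hmd : G.mult v.1 d = 0 := by
        rw [hvx]; exact (G.symm x d).trans (hdw x hxb hxc hxy)
      have hind : ∑ u ∈ Finset.univ.filter (fun w => w ∉ ({a, b, c, d} : Finset V)),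
          (if v.1 ≠ u ∧ ((v.1 = x ∧ u = y) ∨ (v.1 = y ∧ u = x)) then 1 else 0) = 1 := by
        have heq : ∀ u ∈ Finset.univ.filter (fun w => w ∉ ({a, b, c, d} : Finset V)),
            (if v.1 ≠ u ∧ ((v.1 = x ∧ u = y) ∨ (v.1 = y ∧ u = x)) then 1 else 0) =
            (if u = y then 1 else 0) := by
          intro u _
          by_cases hu : u = y
          · subst hu
            rw [if_pos ⟨by rw [hvx]; exact hxy, Or.inl ⟨hvx, rfl⟩⟩, if_pos rfl]
          · rw [if_neg, if_neg hu]
            rintro ⟨-, (⟨-, h⟩ | ⟨h, -⟩)⟩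
            · exact hu h
            · exact hxy (hvx ▸ h)
        rw [Finset.sum_congr rfl heq, Finset.sum_ite_eq']
        rw [if_pos (Finset.mem_filter.mpr ⟨Finset.mem_univ y, hys⟩)]
      rw [degsplit, hind]
      rw [hSsum, hma, hmb, hmc, hmd] at base
      omega
    · by_cases hvy : v.1 = y
      · have hma : G.mult v.1 a = 0 := by
          rw [hvy]; exact (G.symm y a).trans (haw y hyb hyc (fun h => hxy h.symm))
        have hmd : G.mult v.1 d = 1 := by rw [hvy]; exact (G.symm y d).trans hdy1
        have hind : ∑ u ∈ Finset.univ.filter (fun w => w ∉ ({a, b, c, d} : Finset V)),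
            (if v.1 ≠ u ∧ ((v.1 = x ∧ u = y) ∨ (v.1 = y ∧ u = x)) then 1 else 0) = 1 := by
          have heq : ∀ u ∈ Finset.univ.filter (fun w => w ∉ ({a, b, c, d} : Finset V)),
              (if v.1 ≠ u ∧ ((v.1 = x ∧ u = y) ∨ (v.1 = y ∧ u = x)) then 1 else 0) =
              (if u = x then 1 else 0) := by
            intro u _
            by_cases hu : u = x
            · subst hu
              rw [if_pos ⟨by rw [hvy]; exact hxy.symm, Or.inr ⟨hvy, rfl⟩⟩, if_pos rfl]
            · rw [if_neg, if_neg hu]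
              rintro ⟨-, (⟨h, -⟩ | ⟨-, h⟩)⟩
              · exact hvx h
              · exact hu h
          rw [Finset.sum_congr rfl heq, Finset.sum_ite_eq']
          rw [if_pos (Finset.mem_filter.mpr ⟨Finset.mem_univ x, hxs⟩)]
        rw [degsplit, hind]
        rw [hSsum, hma, hmb, hmc, hmd] at base
        omega
      · have hma : G.mult v.1 a = 0 := (G.symm v.1 a).trans (haw v.1 hvb hvc hvx)
        have hmd : G.mult v.1 d = 0 := (G.symm v.1 d).trans (hdw v.1 hvb hvc hvy)
        have hind : ∑ u ∈ Finset.univ.filter (fun w => w ∉ ({a, b, c, d} : Finset V)),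
            (if v.1 ≠ u ∧ ((v.1 = x ∧ u = y) ∨ (v.1 = y ∧ u = x)) then 1 else 0) = 0 := by
          refine Finset.sum_eq_zero fun u _ => ?_
          rw [if_neg]
          rintro ⟨-, (⟨h, -⟩ | ⟨h, -⟩)⟩
          · exact hvx h
          · exact hvy h
        rw [degsplit, hind]
        rw [hSsum, hma, hmb, hmc, hmd] at base
        omega
  exact ⟨hconn', hclaw', hcubic'⟩
end

section
/- With G, G' as in the diamond-reduction construction, if xy was a simple edge of G, then the third neighbours of x and y in G coincide in a vertex w, and in G' the vertices w, x, y form a trumpet whose parallel edge is between x and y. -/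
section Helpers

variable {V : Type*} [Fintype V] [DecidableEq V]

/-- If a sum of naturals is 3 and three distinct points contribute 1 each, all others are 0. -/
lemma three_zero (f : V → ℕ) (p q r s : V)
    (hpq : p ≠ q) (hpr : p ≠ r) (hqr : q ≠ r) (hsp : s ≠ p) (hsq : s ≠ q) (hsr : s ≠ r)
    (hsum : ∑ u, f u = 3) (hp : f p = 1) (hq : f q = 1) (hr : f r = 1) : f s = 0 := by
  have hle : ∑ u ∈ ({p, q, r, s} : Finset V), f u ≤ ∑ u, f u :=
    Finset.sum_le_sum_of_subset (Finset.subset_univ _)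
  rw [Finset.sum_insert (by simp [hpq, hpr, hsp.symm]),
      Finset.sum_insert (by simp [hqr, hsq.symm]),
      Finset.sum_insert (by simp [hsr.symm]), Finset.sum_singleton] at hle
  omega

/-- If a sum of naturals is 3 and two distinct points contribute 1 each, there is a
unique third point contributing 1. -/
lemma three_exists (f : V → ℕ) (p q : V) (hpq : p ≠ q)
    (hsum : ∑ u, f u = 3) (hp : f p = 1) (hq : f q = 1) :
    ∃ r, r ≠ p ∧ r ≠ q ∧ f r = 1 := by
  set S := (Finset.univ \ ({p, q} : Finset V)) with hS
  have hsplit : ∑ u ∈ S, f u + ∑ u ∈ ({p, q} : Finset V), f u = ∑ u, f u :=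
    Finset.sum_sdiff (Finset.subset_univ _)
  rw [Finset.sum_insert (by simp [hpq]), Finset.sum_singleton] at hsplit
  have hrest : ∑ u ∈ S, f u = 1 := by omega
  have hne : ∃ r ∈ S, f r ≠ 0 := by
    by_contra h
    push_neg at h
    rw [Finset.sum_eq_zero (fun u hu => h u hu)] at hrest
    omega
  obtain ⟨r, hrS, hr⟩ := hne
  have hrle : f r ≤ ∑ u ∈ S, f u := Finset.single_le_sum (fun _ _ => Nat.zero_le _) hrS
  have hrS' : r ≠ p ∧ r ≠ q := by
    simpa [hS] using hrS
  exact ⟨r, hrS'.1, hrS'.2, by omega⟩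

end Helpers

/-- If `xy` was a simple edge of `G`, the third neighbours of `x` and `y`
coincide in a vertex `w`, and `w, x, y` form a trumpet of `G'` with parallel side `xy`. -/
theorem stmt12 {V : Type*} [Fintype V] [DecidableEq V] (G : Multigraph V)
    (hconn : G.Connected) (hclaw : G.IsClawFree) (hcubic : G.IsCubic)
    (hK4 : ¬ G.IsK4) (a b c d x y : V) (hdiam : G.IsDiamond a b c d)
    (hx : G.Adj a x) (hxo : x ∉ ({a, b, c, d} : Finset V))
    (hy : G.Adj d y) (hyo : y ∉ ({a, b, c, d} : Finset V))
    (hxy : G.mult x y = 1) :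
    ∃ w, ∃ hwo : w ∉ ({a, b, c, d} : Finset V), w ≠ x ∧ w ≠ y ∧
      G.mult x w = 1 ∧ G.mult y w = 1 ∧
      (G.diamondReduce a b c d x y).IsTrumpet ⟨x, hxo⟩ ⟨y, hyo⟩ ⟨w, hwo⟩ := by
  obtain ⟨hab, hac, had, hbc, hbd, hcd, mad, mab, mac, mbc, mbd, mcd⟩ := hdiam
  simp only [Finset.mem_insert, Finset.mem_singleton, not_or] at hxo hyo
  obtain ⟨hxa', hxb', hxc', hxd'⟩ := hxo
  obtain ⟨hya', hyb', hyc', hyd'⟩ := hyo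
  have hxa : x ≠ a := hxa'
  have hxb : x ≠ b := hxb'
  have hxc : x ≠ c := hxc'
  have hxd : x ≠ d := hxd'
  have hya : y ≠ a := hya'
  have hyb : y ≠ b := hyb'
  have hyc : y ≠ c := hyc'
  have hyd : y ≠ d := hyd'
  have hxy' : x ≠ y := by
    intro h; rw [h, G.loopless] at hxy; omega
  have da : ∀ v, G.degree v = ∑ u, G.mult v u := fun v => rfl
  -- degrees
  have hda : ∑ u, G.mult a u = 3 := hcubic a
  have hdb : ∑ u, G.mult b u = 3 := hcubic b
  have hdc : ∑ u, G.mult c u = 3 := hcubic c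
  have hdd : ∑ u, G.mult d u = 3 := hcubic d
  have hdx : ∑ u, G.mult x u = 3 := hcubic x
  have hdy : ∑ u, G.mult y u = 3 := hcubic y
  -- mult a x = 1
  have max : G.mult a x = 1 := by
    have hle : ∑ u ∈ ({b, c, x} : Finset V), G.mult a u ≤ ∑ u, G.mult a u :=
      Finset.sum_le_sum_of_subset (Finset.subset_univ _)
    rw [Finset.sum_insert (by simp [hbc, hxb.symm]),
        Finset.sum_insert (by simp [hxc.symm]), Finset.sum_singleton] at hle
    have := hx.2
    omega
  have mdy : G.mult d y = 1 := by
    have hle : ∑ u ∈ ({b, c, y} : Finset V), G.mult d u ≤ ∑ u, G.mult d u :=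
      Finset.sum_le_sum_of_subset (Finset.subset_univ _)
    rw [Finset.sum_insert (by simp [hbc, hyb.symm]),
        Finset.sum_insert (by simp [hyc.symm]), Finset.sum_singleton] at hle
    have hdb' : G.mult d b = 1 := by rw [G.symm]; exact mbd
    have hdc' : G.mult d c = 1 := by rw [G.symm]; exact mcd
    have := hy.2
    omega
  -- zeros at a, d, b, c
  have may : G.mult a y = 0 :=
    three_zero (G.mult a) b c x y hbc hxb.symm hxc.symm hyb hyc (Ne.symm hxy') hda mab mac max
  have mdx : G.mult d x = 0 :=
    three_zero (G.mult d) b c y x hbc hyb.symm hyc.symm hxb hxc hxy' hdd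
      (by rw [G.symm]; exact mbd) (by rw [G.symm]; exact mcd) mdy
  have mbx : G.mult b x = 0 :=
    three_zero (G.mult b) a c d x hac had hcd hxa hxc hxd hdb
      (by rw [G.symm]; exact mab) mbc mbd
  have mby : G.mult b y = 0 :=
    three_zero (G.mult b) a c d y hac had hcd hya hyc hyd hdb
      (by rw [G.symm]; exact mab) mbc mbd
  have mcx : G.mult c x = 0 :=
    three_zero (G.mult c) a b d x hab had hbd hxa hxb hxd hdc
      (by rw [G.symm]; exact mac) (by rw [G.symm]; exact mbc) mcd
  have mcy : G.mult c y = 0 :=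
    three_zero (G.mult c) a b d y hab had hbd hya hyb hyd hdc
      (by rw [G.symm]; exact mac) (by rw [G.symm]; exact mbc) mcd
  -- third neighbour of x
  have mxa : G.mult x a = 1 := by rw [G.symm]; exact max
  obtain ⟨w, hwa, hwy, mxw⟩ :=
    three_exists (G.mult x) a y (fun h => hya (h.symm)) hdx mxa hxy
  have hwx : w ≠ x := by
    intro h; rw [h, G.loopless] at mxw; omega
  have hwb : w ≠ b := by
    intro h; rw [h, G.symm] at mxw; omega
  have hwc : w ≠ c := by
    intro h; rw [h, G.symm] at mxw; omega
  have hwd : w ≠ d := by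
    intro h; rw [h, G.symm] at mxw; omega
  have maw : G.mult a w = 0 :=
    three_zero (G.mult a) b c x w hbc hxb.symm hxc.symm hwb hwc hwx hda mab mac max
  -- claw-freeness at x forces y and w adjacent
  have myw_pos : 0 < G.mult y w := by
    by_contra h
    push_neg at h
    interval_cases hmyw : G.mult y w
    exact hclaw ⟨x, a, y, w, hxa, hxy', (fun h => hwx h.symm), (fun h => hya h.symm),
      hwa.symm, hwy.symm, mxa, hxy, mxw, may, maw, hmyw⟩
  -- mult y w = 1
  have myd : G.mult y d = 1 := by rw [G.symm]; exact mdy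
  have myx : G.mult y x = 1 := by rw [G.symm]; exact hxy
  have myw : G.mult y w = 1 := by
    have hle : ∑ u ∈ ({d, x, w} : Finset V), G.mult y u ≤ ∑ u, G.mult y u :=
      Finset.sum_le_sum_of_subset (Finset.subset_univ _)
    rw [Finset.sum_insert (by simp [hxd.symm, hwd.symm]),
        Finset.sum_insert (by simp [hwx.symm]), Finset.sum_singleton] at hle
    omega
  refine ⟨w, by simp [hwa, hwb, hwc, hwd], hwx, hwy, mxw, myw, ?_⟩
  refine ⟨by simp only [ne_eq, Subtype.mk.injEq]; exact hxy',
    by simp only [ne_eq, Subtype.mk.injEq]; exact fun h => hwx h.symm,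
    by simp only [ne_eq, Subtype.mk.injEq]; exact fun h => hwy h.symm, ?_, ?_, ?_⟩
  · show (if x ≠ y ∧ ((x = x ∧ y = y) ∨ (x = y ∧ y = x)) then G.mult x y + 1 else G.mult x y) = 2
    rw [if_pos ⟨hxy', Or.inl ⟨rfl, rfl⟩⟩, hxy]
  · show (if x ≠ w ∧ ((x = x ∧ w = y) ∨ (x = y ∧ w = x)) then G.mult x w + 1 else G.mult x w) = 1
    rw [if_neg (by tauto), mxw]
  · show (if y ≠ w ∧ ((y = x ∧ w = y) ∨ (y = y ∧ w = x)) then G.mult y w + 1 else G.mult y w) = 1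
    rw [if_neg (by tauto), myw]
end

section
/- With G, G' as in the diamond-reduction construction, if G' is isomorphic to K4, then G has exactly eight vertices and is a ring of two diamonds; in particular G then contains an even number of diamonds. -/
namespace Multigraph

lemma pin3 {V : Type*} [Fintype V] [DecidableEq V] (G : Multigraph V)
    (v w1 w2 w3 : V) (h12 : w1 ≠ w2) (h13 : w1 ≠ w3) (h23 : w2 ≠ w3)
    (hdeg : G.degree v = 3)
    (h1 : 1 ≤ G.mult v w1) (h2 : 1 ≤ G.mult v w2) (h3 : 1 ≤ G.mult v w3) :
    G.mult v w1 = 1 ∧ G.mult v w2 = 1 ∧ G.mult v w3 = 1 ∧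
    ∀ u, u ≠ w1 → u ≠ w2 → u ≠ w3 → G.mult v u = 0 := by
  have key : ∀ (t : Finset V), ∑ u ∈ t, G.mult v u ≤ 3 := by
    intro t
    calc ∑ u ∈ t, G.mult v u ≤ ∑ u, G.mult v u :=
          Finset.sum_le_sum_of_subset (Finset.subset_univ t)
      _ = 3 := hdeg
  have h123 : G.mult v w1 + G.mult v w2 + G.mult v w3 ≤ 3 := by
    have := key {w1, w2, w3}
    rwa [Finset.sum_insert (by simp [h12, h13]),
      Finset.sum_insert (by simp [h23]), Finset.sum_singleton, ← add_assoc] at this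
  refine ⟨by omega, by omega, by omega, fun u hu1 hu2 hu3 => ?_⟩
  have := key {u, w1, w2, w3}
  rw [Finset.sum_insert (by simp [hu1, hu2, hu3]),
    Finset.sum_insert (by simp [h12, h13]),
    Finset.sum_insert (by simp [h23]), Finset.sum_singleton] at this
  omega

end Multigraph


set_option maxHeartbeats 4000000 in
open Multigraph in
lemma enumAux {V : Type*} [DecidableEq V] (G : Multigraph V)
    (a b c d x y p q : V)
    (hcov : ∀ v : V, v = a ∨ v = b ∨ v = c ∨ v = d ∨ v = x ∨ v = y ∨ v = p ∨ v = q)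
    (maa : G.mult a a = 0) (mab : G.mult a b = 1) (mac : G.mult a c = 1) (mad : G.mult a d = 0) (max : G.mult a x = 1) (may : G.mult a y = 0) (map : G.mult a p = 0) (maq : G.mult a q = 0) (mba : G.mult b a = 1) (mbb : G.mult b b = 0) (mbc : G.mult b c = 1) (mbd : G.mult b d = 1) (mbx : G.mult b x = 0) (mby : G.mult b y = 0) (mbp : G.mult b p = 0) (mbq : G.mult b q = 0) (mca : G.mult c a = 1) (mcb : G.mult c b = 1) (mcc : G.mult c c = 0) (mcd : G.mult c d = 1) (mcx : G.mult c x = 0) (mcy : G.mult c y = 0) (mcp : G.mult c p = 0) (mcq : G.mult c q = 0) (mda : G.mult d a = 0) (mdb : G.mult d b = 1) (mdc : G.mult d c = 1) (mdd : G.mult d d = 0) (mdx : G.mult d x = 0) (mdy : G.mult d y = 1) (mdp : G.mult d p = 0) (mdq : G.mult d q = 0) (mxa : G.mult x a = 1) (mxb : G.mult x b = 0) (mxc : G.mult x c = 0) (mxd : G.mult x d = 0) (mxx : G.mult x x = 0) (mxy : G.mult x y = 0) (mxp : G.mult x p = 1) (mxq : G.mult x q = 1) (mya : G.mult y a = 0)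 (myb : G.mult y b = 0) (myc : G.mult y c = 0) (myd : G.mult y d = 1) (myx : G.mult y x = 0) (myy : G.mult y y = 0) (myp : G.mult y p = 1) (myq : G.mult y q = 1) (mpa : G.mult p a = 0) (mpb : G.mult p b = 0) (mpc : G.mult p c = 0) (mpd : G.mult p d = 0) (mpx : G.mult p x = 1) (mpy : G.mult p y = 1) (mpp : G.mult p p = 0) (mpq : G.mult p q = 1) (mqa : G.mult q a = 0) (mqb : G.mult q b = 0) (mqc : G.mult q c = 0) (mqd : G.mult q d = 0) (mqx : G.mult q x = 1) (mqy : G.mult q y = 1) (mqp : G.mult q p = 1) (mqq : G.mult q q = 0)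
    (a' b' c' d' : V)
    (h3 : a' ≠ d')
    (h7 : G.mult a' d' = 0) (h8 : G.mult a' b' = 1) (h9 : G.mult a' c' = 1)
    (h10 : G.mult b' c' = 1) (h11 : G.mult b' d' = 1) (h12 : G.mult c' d' = 1) :
    ({a',b',c',d'} : Finset V) = {a,b,c,d} ∨ ({a',b',c',d'} : Finset V) = {y,p,q,x} := by
  rcases hcov a' with rfl|rfl|rfl|rfl|rfl|rfl|rfl|rfl <;>
    rcases hcov b' with rfl|rfl|rfl|rfl|rfl|rfl|rfl|rfl <;>
      first
        | omega
        | (rcases hcov c' with rfl|rfl|rfl|rfl|rfl|rfl|rfl|rfl <;>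
            first
              | omega
              | (rcases hcov d' with rfl|rfl|rfl|rfl|rfl|rfl|rfl|rfl <;>
                  first
                    | omega
                    | (exact absurd rfl h3)
                    | (left; ext v; simp only [Finset.mem_insert, Finset.mem_singleton] <;> tauto)
                    | (right; ext v; simp only [Finset.mem_insert, Finset.mem_singleton] <;> tauto)))

set_option maxHeartbeats 4000000 in
/-- If the diamond reduction `G'` is isomorphic to `K₄`, then `G` has exactly
eight vertices and is a ring of two diamonds; in particular the number of diamonds of `G`
is even. -/
theorem stmt14 {V : Type*} [Fintype V] [DecidableEq V] (G : Multigraph V)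
    (hconn : G.Connected) (hclaw : G.IsClawFree) (hcubic : G.IsCubic)
    (hK4 : ¬ G.IsK4) (a b c d x y : V) (hdiam : G.IsDiamond a b c d)
    (hx : G.Adj a x) (hxo : x ∉ ({a, b, c, d} : Finset V))
    (hy : G.Adj d y) (hyo : y ∉ ({a, b, c, d} : Finset V))
    (hK4' : (G.diamondReduce a b c d x y).IsK4) :
    Fintype.card V = 8 ∧ G.IsRingOfTwoDiamonds ∧ Even G.diamondCount := by
  classical
  obtain ⟨⟨e⟩, hle⟩ := hK4'
  set G' := G.diamondReduce a b c d x y with hG'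
  obtain ⟨nab, nac, nad, nbc, nbd, ncd, mad, mab, mac, mbc, mbd, mcd⟩ := hdiam
  have hc4 : Fintype.card {v : V // v ∉ ({a,b,c,d} : Finset V)} = 4 :=
    (Fintype.card_congr e.toEquiv).trans (Fintype.card_fin 4)
  have hadj : ∀ u v : {v : V // v ∉ ({a,b,c,d} : Finset V)}, u ≠ v → G'.mult u v = 1 := by
    intro u v huv
    have h1 : (⊤ : SimpleGraph (Fin 4)).Adj (e u) (e v) := by
      simp only [SimpleGraph.top_adj]
      exact fun h => huv (e.toEquiv.injective h)
    have h2 : G'.toSimple.Adj u v := e.map_rel_iff.mp h1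
    have h3 := (show u ≠ v ∧ 0 < G'.mult u v from h2).2
    have h4 := hle u v
    omega
  have hred : ∀ (u v : {v : V // v ∉ ({a,b,c,d} : Finset V)}),
      ¬((u : V) = x ∧ (v : V) = y) → ¬((u : V) = y ∧ (v : V) = x) →
      G'.mult u v = G.mult u v := by
    intro u v h1 h2
    simp only [hG', Multigraph.diamondReduce]
    rw [if_neg]
    tauto
  have hS : ∀ u : {v : V // v ∉ ({a,b,c,d} : Finset V)},
      (u : V) ≠ a ∧ (u : V) ≠ b ∧ (u : V) ≠ c ∧ (u : V) ≠ d := by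
    intro u
    have h := u.2
    simp only [Finset.mem_insert, Finset.mem_singleton, not_or] at h
    exact h
  obtain ⟨nxa, nxb, nxc, nxd⟩ := hS ⟨x, hxo⟩
  obtain ⟨nya, nyb, nyc, nyd⟩ := hS ⟨y, hyo⟩
  -- x ≠ y
  have nxy : x ≠ y := by
    intro hxyeq
    subst hxyeq
    obtain ⟨u1, u2, u3, hu12, hu13, hu23, hE⟩ := Finset.card_eq_three.mp
      (show ((Finset.univ.erase (⟨x, hxo⟩ : {v : V // v ∉ ({a,b,c,d} : Finset V)})).card = 3) by
        rw [Finset.card_erase_of_mem (Finset.mem_univ _), Finset.card_univ, hc4])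
    have hm1 : u1 ∈ Finset.univ.erase (⟨x, hxo⟩ : {v : V // v ∉ ({a,b,c,d} : Finset V)}) := by
      rw [hE]; simp
    have hm2 : u2 ∈ Finset.univ.erase (⟨x, hxo⟩ : {v : V // v ∉ ({a,b,c,d} : Finset V)}) := by
      rw [hE]; simp
    have hn1 : (u1 : V) ≠ x := fun h => (Finset.mem_erase.mp hm1).1 (Subtype.ext h)
    have hn2 : (u2 : V) ≠ x := fun h => (Finset.mem_erase.mp hm2).1 (Subtype.ext h)
    have hg1 : 1 ≤ G.mult x u1 := by
      have h := hadj ⟨x, hxo⟩ u1 (fun h => hn1 (congrArg Subtype.val h).symm)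
      rw [hred _ _ (fun hc => hn1 hc.2) (fun hc => hn1 hc.2)] at h
      exact h.ge
    have hg2 : 1 ≤ G.mult x u2 := by
      have h := hadj ⟨x, hxo⟩ u2 (fun h => hn2 (congrArg Subtype.val h).symm)
      rw [hred _ _ (fun hc => hn2 hc.2) (fun hc => hn2 hc.2)] at h
      exact h.ge
    have hga : 1 ≤ G.mult x a := by rw [G.symm]; exact hx.2
    have hgd : 1 ≤ G.mult x d := by rw [G.symm]; exact hy.2
    have hu1a : (u1 : V) ≠ a := (hS u1).1
    have hu1d : (u1 : V) ≠ d := (hS u1).2.2.2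
    have hu2a : (u2 : V) ≠ a := (hS u2).1
    have hu2d : (u2 : V) ≠ d := (hS u2).2.2.2
    have hpin := Multigraph.pin3 G x a d u1 nad hu1a.symm hu1d.symm (hcubic x) hga hgd hg1
    have h0 := hpin.2.2.2 u2 hu2a hu2d (fun h => hu12 (Subtype.ext h).symm)
    omega
  -- the two extra vertices p, q
  have hx'y' : (⟨x, hxo⟩ : {v : V // v ∉ ({a,b,c,d} : Finset V)}) ≠ ⟨y, hyo⟩ := by
    intro h; exact nxy (congrArg Subtype.val h)
  have hcard2 : ((Finset.univ : Finset {v : V // v ∉ ({a,b,c,d} : Finset V)}) \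
      {⟨x, hxo⟩, ⟨y, hyo⟩}).card = 2 := by
    rw [Finset.card_sdiff_of_subset (Finset.subset_univ _), Finset.card_univ, hc4,
      Finset.card_insert_of_notMem (by simp [hx'y']), Finset.card_singleton]
  obtain ⟨p', q', hpq', hPQ⟩ := Finset.card_eq_two.mp hcard2
  have hpmem : p' ∈ (Finset.univ : Finset {v : V // v ∉ ({a,b,c,d} : Finset V)}) \
      {⟨x, hxo⟩, ⟨y, hyo⟩} := by rw [hPQ]; simp
  have hqmem : q' ∈ (Finset.univ : Finset {v : V // v ∉ ({a,b,c,d} : Finset V)}) \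
      {⟨x, hxo⟩, ⟨y, hyo⟩} := by rw [hPQ]; simp
  simp only [Finset.mem_sdiff, Finset.mem_univ, Finset.mem_insert, Finset.mem_singleton,
    true_and, not_or] at hpmem hqmem
  have hV4 : ∀ v : {v : V // v ∉ ({a,b,c,d} : Finset V)},
      v = ⟨x, hxo⟩ ∨ v = ⟨y, hyo⟩ ∨ v = p' ∨ v = q' := by
    intro v
    by_cases h1 : v = ⟨x, hxo⟩
    · exact Or.inl h1
    by_cases h2 : v = ⟨y, hyo⟩
    · exact Or.inr (Or.inl h2)
    have hv : v ∈ (Finset.univ : Finset {v : V // v ∉ ({a,b,c,d} : Finset V)}) \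
        {⟨x, hxo⟩, ⟨y, hyo⟩} := by simp [h1, h2]
    rw [hPQ] at hv
    simp only [Finset.mem_insert, Finset.mem_singleton] at hv
    rcases hv with h | h
    · exact Or.inr (Or.inr (Or.inl h))
    · exact Or.inr (Or.inr (Or.inr h))
  obtain ⟨npa, npb, npc, npd⟩ := hS p'
  obtain ⟨nqa, nqb, nqc, nqd⟩ := hS q'
  obtain ⟨p, hpo⟩ := p'
  obtain ⟨q, hqo⟩ := q'
  simp only at npa npb npc npd nqa nqb nqc nqd
  have npx : p ≠ x := fun h => hpmem.1 (Subtype.ext h)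
  have npy : p ≠ y := fun h => hpmem.2 (Subtype.ext h)
  have nqx : q ≠ x := fun h => hqmem.1 (Subtype.ext h)
  have nqy : q ≠ y := fun h => hqmem.2 (Subtype.ext h)
  have npq : p ≠ q := fun h => hpq' (Subtype.ext h)
  have nxp : x ≠ p := fun h => npx h.symm
  have nyp : y ≠ p := fun h => npy h.symm
  have nxq : x ≠ q := fun h => nqx h.symm
  have nyq : y ≠ q := fun h => nqy h.symm
  have nax : a ≠ x := fun h => nxa h.symm
  have nay : a ≠ y := fun h => nya h.symm
  have nap : a ≠ p := fun h => npa h.symm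
  have naq : a ≠ q := fun h => nqa h.symm
  have nba : b ≠ a := fun h => nab h.symm
  have nbx : b ≠ x := fun h => nxb h.symm
  have nby : b ≠ y := fun h => nyb h.symm
  have nbp : b ≠ p := fun h => npb h.symm
  have nbq : b ≠ q := fun h => nqb h.symm
  have nca : c ≠ a := fun h => nac h.symm
  have ncb : c ≠ b := fun h => nbc h.symm
  have ncx : c ≠ x := fun h => nxc h.symm
  have ncy : c ≠ y := fun h => nyc h.symm
  have ncp : c ≠ p := fun h => npc h.symm
  have ncq : c ≠ q := fun h => nqc h.symm
  have nda : d ≠ a := fun h => nad h.symm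
  have ndb : d ≠ b := fun h => nbd h.symm
  have ndc : d ≠ c := fun h => ncd h.symm
  have ndx : d ≠ x := fun h => nxd h.symm
  have ndy : d ≠ y := fun h => nyd h.symm
  have ndp : d ≠ p := fun h => npd h.symm
  have ndq : d ≠ q := fun h => nqd h.symm
  have nyx : y ≠ x := fun h => nxy h.symm
  have nqp : q ≠ p := fun h => npq h.symm
  -- cover
  have hcov : ∀ v : V, v = a ∨ v = b ∨ v = c ∨ v = d ∨ v = x ∨ v = y ∨ v = p ∨ v = q := by
    intro v
    by_cases hv : v ∈ ({a,b,c,d} : Finset V)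
    · simp only [Finset.mem_insert, Finset.mem_singleton] at hv
      tauto
    · rcases hV4 ⟨v, hv⟩ with h|h|h|h <;> simp only [Subtype.mk.injEq] at h
      · exact Or.inr (Or.inr (Or.inr (Or.inr (Or.inl h))))
      · exact Or.inr (Or.inr (Or.inr (Or.inr (Or.inr (Or.inl h)))))
      · exact Or.inr (Or.inr (Or.inr (Or.inr (Or.inr (Or.inr (Or.inl h))))))
      · exact Or.inr (Or.inr (Or.inr (Or.inr (Or.inr (Or.inr (Or.inr h))))))
  -- edge values from G'
  have exy : G.mult x y = 0 := by
    have h := hadj ⟨x, hxo⟩ ⟨y, hyo⟩ hx'y'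
    have h2 : G'.mult ⟨x, hxo⟩ ⟨y, hyo⟩ = G.mult x y + 1 := by
      simp [hG', Multigraph.diamondReduce, nxy]
    omega
  have exp : G.mult x p = 1 := by
    have h := hadj ⟨x, hxo⟩ ⟨p, hpo⟩ (fun h => npx (congrArg Subtype.val h).symm)
    rwa [hred _ _ (fun hc => npy hc.2) (fun hc => nxy hc.1)] at h
  have exq : G.mult x q = 1 := by
    have h := hadj ⟨x, hxo⟩ ⟨q, hqo⟩ (fun h => nqx (congrArg Subtype.val h).symm)
    rwa [hred _ _ (fun hc => nqy hc.2) (fun hc => nxy hc.1)] at h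
  have eyp : G.mult y p = 1 := by
    have h := hadj ⟨y, hyo⟩ ⟨p, hpo⟩ (fun h => npy (congrArg Subtype.val h).symm)
    rwa [hred _ _ (fun hc => nxy hc.1.symm) (fun hc => npx hc.2)] at h
  have eyq : G.mult y q = 1 := by
    have h := hadj ⟨y, hyo⟩ ⟨q, hqo⟩ (fun h => nqy (congrArg Subtype.val h).symm)
    rwa [hred _ _ (fun hc => nxy hc.1.symm) (fun hc => nqx hc.2)] at h
  have epq : G.mult p q = 1 := by
    have h := hadj ⟨p, hpo⟩ ⟨q, hqo⟩ (fun h => npq (congrArg Subtype.val h))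
    rwa [hred _ _ (fun hc => npx hc.1) (fun hc => npy hc.1)] at h
  -- pin down all degrees
  have hga : 1 ≤ G.mult x a := by rw [G.symm]; exact hx.2
  have hgd : 1 ≤ G.mult y d := by rw [G.symm]; exact hy.2
  have pinA := Multigraph.pin3 G a b c x nbc (fun h => nxb h.symm) (fun h => nxc h.symm) (hcubic a)
    mab.ge mac.ge hx.2
  have pinB := Multigraph.pin3 G b a c d nac nad ncd (hcubic b)
    (by rw [G.symm]; exact mab.ge) mbc.ge mbd.ge
  have pinC := Multigraph.pin3 G c a b d nab nad nbd (hcubic c)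
    (by rw [G.symm]; exact mac.ge) (by rw [G.symm]; exact mbc.ge) mcd.ge
  have pinD := Multigraph.pin3 G d b c y nbc (fun h => nyb h.symm) (fun h => nyc h.symm) (hcubic d)
    (by rw [G.symm]; exact mbd.ge) (by rw [G.symm]; exact mcd.ge) hy.2
  have pinX := Multigraph.pin3 G x p q a npq npa nqa (hcubic x) exp.ge exq.ge hga
  have pinY := Multigraph.pin3 G y p q d npq npd nqd (hcubic y) eyp.ge eyq.ge hgd
  have pinP := Multigraph.pin3 G p x y q nxy nxq nyq (hcubic p)
    (by rw [G.symm]; exact exp.ge) (by rw [G.symm]; exact eyp.ge) epq.ge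
  have pinQ := Multigraph.pin3 G q x y p nxy nxp nyp (hcubic q)
    (by rw [G.symm]; exact exq.ge) (by rw [G.symm]; exact eyq.ge)
    (by rw [G.symm]; exact epq.ge)
  clear hadj hred hV4 hle hpmem hqmem hPQ hcard2 hx'y' hclaw hconn hK4
  have maa : G.mult a a = 0 := G.loopless a
  have mab : G.mult a b = 1 := pinA.1
  have mac : G.mult a c = 1 := pinA.2.1
  have mad : G.mult a d = 0 := pinA.2.2.2 d (fun h => nbd h.symm) (fun h => ncd h.symm) (fun h => nxd h.symm)
  have max : G.mult a x = 1 := pinA.2.2.1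
  have may : G.mult a y = 0 := pinA.2.2.2 y nyb nyc (fun h => nxy h.symm)
  have map : G.mult a p = 0 := pinA.2.2.2 p npb npc npx
  have maq : G.mult a q = 0 := pinA.2.2.2 q nqb nqc nqx
  have mba : G.mult b a = 1 := pinB.1
  have mbb : G.mult b b = 0 := G.loopless b
  have mbc : G.mult b c = 1 := pinB.2.1
  have mbd : G.mult b d = 1 := pinB.2.2.1
  have mbx : G.mult b x = 0 := pinB.2.2.2 x nxa nxc nxd
  have mby : G.mult b y = 0 := pinB.2.2.2 y nya nyc nyd
  have mbp : G.mult b p = 0 := pinB.2.2.2 p npa npc npd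
  have mbq : G.mult b q = 0 := pinB.2.2.2 q nqa nqc nqd
  have mca : G.mult c a = 1 := pinC.1
  have mcb : G.mult c b = 1 := pinC.2.1
  have mcc : G.mult c c = 0 := G.loopless c
  have mcd : G.mult c d = 1 := pinC.2.2.1
  have mcx : G.mult c x = 0 := pinC.2.2.2 x nxa nxb nxd
  have mcy : G.mult c y = 0 := pinC.2.2.2 y nya nyb nyd
  have mcp : G.mult c p = 0 := pinC.2.2.2 p npa npb npd
  have mcq : G.mult c q = 0 := pinC.2.2.2 q nqa nqb nqd
  have mda : G.mult d a = 0 := pinD.2.2.2 a nab nac (fun h => nya h.symm)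
  have mdb : G.mult d b = 1 := pinD.1
  have mdc : G.mult d c = 1 := pinD.2.1
  have mdd : G.mult d d = 0 := G.loopless d
  have mdx : G.mult d x = 0 := pinD.2.2.2 x nxb nxc nxy
  have mdy : G.mult d y = 1 := pinD.2.2.1
  have mdp : G.mult d p = 0 := pinD.2.2.2 p npb npc npy
  have mdq : G.mult d q = 0 := pinD.2.2.2 q nqb nqc nqy
  have mxa : G.mult x a = 1 := pinX.2.2.1
  have mxb : G.mult x b = 0 := pinX.2.2.2 b (fun h => npb h.symm) (fun h => nqb h.symm) (fun h => nab h.symm)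
  have mxc : G.mult x c = 0 := pinX.2.2.2 c (fun h => npc h.symm) (fun h => nqc h.symm) (fun h => nac h.symm)
  have mxd : G.mult x d = 0 := pinX.2.2.2 d (fun h => npd h.symm) (fun h => nqd h.symm) (fun h => nad h.symm)
  have mxx : G.mult x x = 0 := G.loopless x
  have mxy : G.mult x y = 0 := pinX.2.2.2 y nyp nyq nya
  have mxp : G.mult x p = 1 := pinX.1
  have mxq : G.mult x q = 1 := pinX.2.1
  have mya : G.mult y a = 0 := pinY.2.2.2 a (fun h => npa h.symm) (fun h => nqa h.symm) nad
  have myb : G.mult y b = 0 := pinY.2.2.2 b (fun h => npb h.symm) (fun h => nqb h.symm) nbd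
  have myc : G.mult y c = 0 := pinY.2.2.2 c (fun h => npc h.symm) (fun h => nqc h.symm) ncd
  have myd : G.mult y d = 1 := pinY.2.2.1
  have myx : G.mult y x = 0 := pinY.2.2.2 x nxp nxq nxd
  have myy : G.mult y y = 0 := G.loopless y
  have myp : G.mult y p = 1 := pinY.1
  have myq : G.mult y q = 1 := pinY.2.1
  have mpa : G.mult p a = 0 := pinP.2.2.2 a (fun h => nxa h.symm) (fun h => nya h.symm) (fun h => nqa h.symm)
  have mpb : G.mult p b = 0 := pinP.2.2.2 b (fun h => nxb h.symm) (fun h => nyb h.symm) (fun h => nqb h.symm)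
  have mpc : G.mult p c = 0 := pinP.2.2.2 c (fun h => nxc h.symm) (fun h => nyc h.symm) (fun h => nqc h.symm)
  have mpd : G.mult p d = 0 := pinP.2.2.2 d (fun h => nxd h.symm) (fun h => nyd h.symm) (fun h => nqd h.symm)
  have mpx : G.mult p x = 1 := pinP.1
  have mpy : G.mult p y = 1 := pinP.2.1
  have mpp : G.mult p p = 0 := G.loopless p
  have mpq : G.mult p q = 1 := pinP.2.2.1
  have mqa : G.mult q a = 0 := pinQ.2.2.2 a (fun h => nxa h.symm) (fun h => nya h.symm) (fun h => npa h.symm)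
  have mqb : G.mult q b = 0 := pinQ.2.2.2 b (fun h => nxb h.symm) (fun h => nyb h.symm) (fun h => npb h.symm)
  have mqc : G.mult q c = 0 := pinQ.2.2.2 c (fun h => nxc h.symm) (fun h => nyc h.symm) (fun h => npc h.symm)
  have mqd : G.mult q d = 0 := pinQ.2.2.2 d (fun h => nxd h.symm) (fun h => nyd h.symm) (fun h => npd h.symm)
  have mqx : G.mult q x = 1 := pinQ.1
  have mqy : G.mult q y = 1 := pinQ.2.1
  have mqp : G.mult q p = 1 := pinQ.2.2.1
  have mqq : G.mult q q = 0 := G.loopless q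
  clear pinA pinB pinC pinD pinX pinY pinP pinQ
  -- second diamond
  have hdiam2 : G.IsDiamond y p q x := by
    exact ⟨nyp, nyq, (fun h => nxy h.symm), npq, npx, nqx, myx, myp, myq, mpq, mpx, mqx⟩
  -- the diamond sets
  have hsubset : ∀ s ∈ G.diamondSets, s = ({a,b,c,d} : Finset V) ∨ s = ({y,p,q,x} : Finset V) := by
    rintro s ⟨a', b', c', d', rfl, h1, h2, h3, h4, h5, h6, h7, h8, h9, h10, h11, h12⟩
    exact enumAux G a b c d x y p q hcov maa mab mac mad max may map maq mba mbb mbc mbd mbx mby mbp mbq mca mcb mcc mcd mcx mcy mcp mcq mda mdb mdc mdd mdx mdy mdp mdq mxa mxb mxc mxd mxx mxy mxp mxq mya myb myc myd myx myy myp myq mpa mpb mpc mpd mpx mpy mpp mpq mqa mqb mqc mqd mqx mqy mqp mqq a' b' c' d' h3 h7 h8 h9 h10 h11 h12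
  have hsets : G.diamondSets = {({a,b,c,d} : Finset V), ({y,p,q,x} : Finset V)} := by
    apply Set.eq_of_subset_of_subset
    · intro s hs
      rcases hsubset s hs with h | h <;> simp [h]
    · intro s hs
      simp only [Set.mem_insert_iff, Set.mem_singleton_iff] at hs
      rcases hs with rfl | rfl
      · exact ⟨a, b, c, d, rfl, nab, nac, nad, nbc, nbd, ncd, mad, mab, mac, mbc, mbd, mcd⟩
      · exact ⟨y, p, q, x, rfl, hdiam2⟩
  have hne12 : ({a,b,c,d} : Finset V) ≠ ({y,p,q,x} : Finset V) := by
    intro h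
    have ha : a ∈ ({y,p,q,x} : Finset V) := h ▸ (by simp)
    simp only [Finset.mem_insert, Finset.mem_singleton] at ha
    rcases ha with h'|h'|h'|h'
    · exact nya h'.symm
    · exact npa h'.symm
    · exact nqa h'.symm
    · exact nxa h'.symm
  have hcount : G.diamondCount = 2 := by
    rw [Multigraph.diamondCount, hsets, Set.ncard_pair hne12]
  -- card V = 8
  have huniv : (Finset.univ : Finset V) = {a,b,c,d,x,y,p,q} := by
    ext v
    simp only [Finset.mem_univ, Finset.mem_insert, Finset.mem_singleton, true_iff]
    exact hcov v
  have hcard8 : Fintype.card V = 8 := by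
    rw [← Finset.card_univ, huniv]
    rw [Finset.card_insert_of_notMem (by simp [nab, nac, nad, nap, naq, nax, nay, nba, nbc, nbd, nbp, nbq, nbx, nby, nca, ncb, ncd, ncp, ncq, ncx, ncy, nda, ndb, ndc, ndp, ndq, ndx, ndy, npa, npb, npc, npd, npq, npx, npy, nqa, nqb, nqc, nqd, nqp, nqx, nqy, nxa, nxb, nxc, nxd, nxp, nxq, nxy, nya, nyb, nyc, nyd, nyp, nyq, nyx]),
      Finset.card_insert_of_notMem (by simp [nab, nac, nad, nap, naq, nax, nay, nba, nbc, nbd, nbp, nbq, nbx, nby, nca, ncb, ncd, ncp, ncq, ncx, ncy, nda, ndb, ndc, ndp, ndq, ndx, ndy, npa, npb, npc, npd, npq, npx, npy, nqa, nqb, nqc, nqd, nqp, nqx, nqy, nxa, nxb, nxc, nxd, nxp, nxq, nxy, nya, nyb, nyc, nyd, nyp, nyq, nyx]),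
      Finset.card_insert_of_notMem (by simp [nab, nac, nad, nap, naq, nax, nay, nba, nbc, nbd, nbp, nbq, nbx, nby, nca, ncb, ncd, ncp, ncq, ncx, ncy, nda, ndb, ndc, ndp, ndq, ndx, ndy, npa, npb, npc, npd, npq, npx, npy, nqa, nqb, nqc, nqd, nqp, nqx, nqy, nxa, nxb, nxc, nxd, nxp, nxq, nxy, nya, nyb, nyc, nyd, nyp, nyq, nyx]),
      Finset.card_insert_of_notMem (by simp [nab, nac, nad, nap, naq, nax, nay, nba, nbc, nbd, nbp, nbq, nbx, nby, nca, ncb, ncd, ncp, ncq, ncx, ncy, nda, ndb, ndc, ndp, ndq, ndx, ndy, npa, npb, npc, npd, npq, npx, npy, nqa, nqb, nqc, nqd, nqp, nqx, nqy, nxa, nxb, nxc, nxd, nxp, nxq, nxy, nya, nyb, nyc, nyd, nyp, nyq, nyx]),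
      Finset.card_insert_of_notMem (by simp [nab, nac, nad, nap, naq, nax, nay, nba, nbc, nbd, nbp, nbq, nbx, nby, nca, ncb, ncd, ncp, ncq, ncx, ncy, nda, ndb, ndc, ndp, ndq, ndx, ndy, npa, npb, npc, npd, npq, npx, npy, nqa, nqb, nqc, nqd, nqp, nqx, nqy, nxa, nxb, nxc, nxd, nxp, nxq, nxy, nya, nyb, nyc, nyd, nyp, nyq, nyx]),
      Finset.card_insert_of_notMem (by simp [nab, nac, nad, nap, naq, nax, nay, nba, nbc, nbd, nbp, nbq, nbx, nby, nca, ncb, ncd, ncp, ncq, ncx, ncy, nda, ndb, ndc, ndp, ndq, ndx, ndy, npa, npb, npc, npd, npq, npx, npy, nqa, nqb, nqc, nqd, nqp, nqx, nqy, nxa, nxb, nxc, nxd, nxp, nxq, nxy, nya, nyb, nyc, nyd, nyp, nyq, nyx]),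
      Finset.card_insert_of_notMem (by simp [nab, nac, nad, nap, naq, nax, nay, nba, nbc, nbd, nbp, nbq, nbx, nby, nca, ncb, ncd, ncp, ncq, ncx, ncy, nda, ndb, ndc, ndp, ndq, ndx, ndy, npa, npb, npc, npd, npq, npx, npy, nqa, nqb, nqc, nqd, nqp, nqx, nqy, nxa, nxb, nxc, nxd, nxp, nxq, nxy, nya, nyb, nyc, nyd, nyp, nyq, nyx]),
      Finset.card_singleton]
  refine ⟨hcard8, ⟨a, b, c, d, y, p, q, x, ?_, ?_, ?_, hdiam2, mdy, mxa⟩, ?_⟩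
  · simp [List.nodup_cons, nab, nac, nad, nap, naq, nax, nay, nba, nbc, nbd, nbp, nbq, nbx, nby, nca, ncb, ncd, ncp, ncq, ncx, ncy, nda, ndb, ndc, ndp, ndq, ndx, ndy, npa, npb, npc, npd, npq, npx, npy, nqa, nqb, nqc, nqd, nqp, nqx, nqy, nxa, nxb, nxc, nxd, nxp, nxq, nxy, nya, nyb, nyc, nyd, nyp, nyq, nyx]
  · intro v
    simp only [List.mem_cons, List.not_mem_nil, or_false]
    have := hcov v
    tauto
  · exact ⟨nab, nac, nad, nbc, nbd, ncd, mad, mab, mac, mbc, mbd, mcd⟩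
  · rw [hcount]
    exact ⟨1, rfl⟩
end
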